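/- arXiv:2307.09663 — 8 statements merged into one kernel-verified Lean document; each statement's English description precedes it below -/
import Mathlib

section
/- Let G be a simple graph on n vertices that is (s,t) regular with respect to a clique partition F of size k, i.e., every vertex lies in exactly t cliques of F and every clique of F has exactly s vertices. Then: (i) λ_i(G) − λ_i(P_G) = s − t for all 1 ≤ i ≤ min{n, k}; (ii) if n = min{n,k}, then λ_i(P_G) = −s for n+1 ≤ i ≤ k; (iii) if k = min{n,k}, then λ_i(G) = −t for k+1 ≤ i ≤ n. -/
open Matrix Finset

/-- A clique partition of `G`: each member is a clique and every edge of `G`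
lies in exactly one member. -/
def IsCliquePartition {n k : ℕ} (G : SimpleGraph (Fin n)) (F : Fin k → Finset (Fin n)) : Prop :=
  (∀ j, G.IsClique ↑(F j)) ∧ ∀ ⦃u v : Fin n⦄, G.Adj u v → ∃! j, u ∈ F j ∧ v ∈ F j

/-- The vertex-clique incidence matrix of the family `F`. -/
def vcMat {n k : ℕ} (F : Fin k → Finset (Fin n)) : Matrix (Fin n) (Fin k) ℝ :=
  fun i j => if i ∈ F j then 1 else 0

/-- The clique-degree of vertex `i`: the number of members of `F` containing `i`. -/
def cliqueDeg {n k : ℕ} (F : Fin k → Finset (Fin n)) (i : Fin n) : ℕ :=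
  (Finset.univ.filter fun j => i ∈ F j).card

/-- The adjacency matrix of the clique partition graph `P_G`:
two distinct members of `F` are adjacent iff they share a vertex. -/
def pgMat {n k : ℕ} (F : Fin k → Finset (Fin n)) : Matrix (Fin k) (Fin k) ℝ :=
  fun j l => if j ≠ l ∧ (F j ∩ F l).Nonempty then 1 else 0

/-- The `i`-th largest eigenvalue (0-based) of a real symmetric matrix. -/
noncomputable def eigsDesc {N : ℕ} (A : Matrix (Fin N) (Fin N) ℝ) : Fin N → ℝ :=
  fun i => if hA : A.IsHermitian then (hA.eigenvalues ∘ Tuple.sort hA.eigenvalues) i.rev else 0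

/-- The number of negative eigenvalues (with multiplicity) of a real symmetric matrix. -/
noncomputable def negInertia {m : Type*} [Fintype m] [DecidableEq m] (A : Matrix m m ℝ) : ℕ :=
  if hA : A.IsHermitian then (Finset.univ.filter fun i => hA.eigenvalues i < 0).card else 0

/-- The number of positive eigenvalues (with multiplicity) of a real symmetric matrix. -/
noncomputable def posInertia {m : Type*} [Fintype m] [DecidableEq m] (A : Matrix m m ℝ) : ℕ :=
  if hA : A.IsHermitian then (Finset.univ.filter fun i => 0 < hA.eigenvalues i).card else 0

/-- The `i`-th largest value (0-based) of a tuple of naturals. -/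
noncomputable def sortedDesc {N : ℕ} (f : Fin N → ℕ) : Fin N → ℕ :=
  fun i => (f ∘ Tuple.sort f) i.rev

open Polynomial

lemma mono_eq_of_perm {N : ℕ} {g h : Fin N → ℝ} (hg : Monotone g) (hh : Monotone h)
    (hp : (List.ofFn g).Perm (List.ofFn h)) : g = h :=
  List.ofFn_injective (List.Perm.eq_of_sortedLE hg.sortedLE_ofFn hh.sortedLE_ofFn hp)

lemma charpoly_conj {m : Type*} [Fintype m] [DecidableEq m] {R : Type*} [CommRing R]
    (S M S' : Matrix m m R) (h1 : S * S' = 1) (h2 : S' * S = 1) :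
    (S * M * S').charpoly = M.charpoly := by
  have key : (C : R →+* R[X]).mapMatrix S * charmatrix M * (C : R →+* R[X]).mapMatrix S'
      = charmatrix (S * M * S') := by
    have hx : (C : R →+* R[X]).mapMatrix S * Matrix.scalar m (X : R[X])
        = Matrix.scalar m (X : R[X]) * (C : R →+* R[X]).mapMatrix S :=
      ((scalar_commute (X : R[X]) (fun r' => Commute.all _ _) _)).eq.symm
    rw [charmatrix, charmatrix, mul_sub, sub_mul, hx]
    rw [mul_assoc (Matrix.scalar m (X : R[X])), ← _root_.map_mul, h1, _root_.map_one, mul_one]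
    rw [← _root_.map_mul, ← _root_.map_mul]
  rw [Matrix.charpoly, Matrix.charpoly, ← key, Matrix.det_mul, Matrix.det_mul]
  have hd : ((C : R →+* R[X]).mapMatrix S).det * ((C : R →+* R[X]).mapMatrix S').det = 1 := by
    rw [← Matrix.det_mul, ← _root_.map_mul, h1, _root_.map_one, Matrix.det_one]
  calc ((C : R →+* R[X]).mapMatrix S).det * (charmatrix M).det
        * ((C : R →+* R[X]).mapMatrix S').det
      = (charmatrix M).det * (((C : R →+* R[X]).mapMatrix S).det
        * ((C : R →+* R[X]).mapMatrix S').det) := by ring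
    _ = (charmatrix M).det := by rw [hd, mul_one]

lemma charpoly_zero' (m : Type*) [Fintype m] [DecidableEq m] {R : Type*} [CommRing R] :
    (0 : Matrix m m R).charpoly = X ^ (Fintype.card m) := by
  rw [Matrix.charpoly, charmatrix]
  simp [Matrix.scalar_apply, det_diagonal, Finset.prod_const, Finset.card_univ]

lemma charpoly_mul_transpose_comm {a b : ℕ} (M : Matrix (Fin a) (Fin b) ℝ) :
    (M * Mᵀ).charpoly * X ^ b = X ^ a * (Mᵀ * M).charpoly := by
  have h1 : fromBlocks (1 : Matrix (Fin a) (Fin a) ℝ) M (0 : Matrix (Fin b) (Fin a) ℝ) 1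
      * fromBlocks (1 : Matrix (Fin a) (Fin a) ℝ) (-M) (0 : Matrix (Fin b) (Fin a) ℝ) 1 = 1 := by
    simp [Matrix.fromBlocks_multiply, ← Matrix.fromBlocks_one]
  have h2 : fromBlocks (1 : Matrix (Fin a) (Fin a) ℝ) (-M) (0 : Matrix (Fin b) (Fin a) ℝ) 1
      * fromBlocks (1 : Matrix (Fin a) (Fin a) ℝ) M (0 : Matrix (Fin b) (Fin a) ℝ) 1 = 1 := by
    simp [Matrix.fromBlocks_multiply, ← Matrix.fromBlocks_one]
  have key := charpoly_conj (fromBlocks (1 : Matrix (Fin a) (Fin a) ℝ) M (0 : Matrix (Fin b) (Fin a) ℝ) 1)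
    (fromBlocks (0 : Matrix (Fin a) (Fin a) ℝ) (0 : Matrix (Fin a) (Fin b) ℝ) Mᵀ (Mᵀ * M)) (fromBlocks (1 : Matrix (Fin a) (Fin a) ℝ) (-M) (0 : Matrix (Fin b) (Fin a) ℝ) 1) h1 h2
  have hprod : fromBlocks (1 : Matrix (Fin a) (Fin a) ℝ) M (0 : Matrix (Fin b) (Fin a) ℝ) 1
      * fromBlocks (0 : Matrix (Fin a) (Fin a) ℝ) (0 : Matrix (Fin a) (Fin b) ℝ) Mᵀ (Mᵀ * M) * fromBlocks (1 : Matrix (Fin a) (Fin a) ℝ) (-M) (0 : Matrix (Fin b) (Fin a) ℝ) 1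
      = fromBlocks (M * Mᵀ) (0 : Matrix (Fin a) (Fin b) ℝ) Mᵀ (0 : Matrix (Fin b) (Fin b) ℝ) := by
    simp [Matrix.fromBlocks_multiply, Matrix.mul_assoc]
  rw [hprod] at key
  rw [Matrix.charpoly_fromBlocks_zero₁₂, Matrix.charpoly_fromBlocks_zero₁₂] at key
  rw [charpoly_zero', charpoly_zero'] at key
  simpa [Fintype.card_fin] using key

lemma charpoly_diag_real {N : ℕ} (d : Fin N → ℝ) :
    (Matrix.diagonal d).charpoly = ∏ i, (X - C (d i)) := by
  rw [Matrix.charpoly_of_upperTriangular _ (Matrix.blockTriangular_diagonal d)]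
  simp

lemma spectral_real {N : ℕ} {A : Matrix (Fin N) (Fin N) ℝ} (hA : A.IsHermitian) :
    A = (hA.eigenvectorUnitary : Matrix (Fin N) (Fin N) ℝ)
      * Matrix.diagonal hA.eigenvalues
      * star (hA.eigenvectorUnitary : Matrix (Fin N) (Fin N) ℝ) := by
  have := hA.spectral_theorem
  simpa [RCLike.ofReal_real_eq_id] using this

lemma charpoly_hermitian {N : ℕ} {A : Matrix (Fin N) (Fin N) ℝ} (hA : A.IsHermitian) :
    A.charpoly = ∏ i, (X - C (hA.eigenvalues i)) := by
  have hU1 : (hA.eigenvectorUnitary : Matrix (Fin N) (Fin N) ℝ)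
      * star (hA.eigenvectorUnitary : Matrix (Fin N) (Fin N) ℝ) = 1 :=
    (Matrix.mem_unitaryGroup_iff).mp hA.eigenvectorUnitary.2
  have hU2 : star (hA.eigenvectorUnitary : Matrix (Fin N) (Fin N) ℝ)
      * (hA.eigenvectorUnitary : Matrix (Fin N) (Fin N) ℝ) = 1 :=
    (Matrix.mem_unitaryGroup_iff').mp hA.eigenvectorUnitary.2
  conv_lhs => rw [spectral_real hA]
  rw [charpoly_conj _ _ _ hU1 hU2, charpoly_diag_real]

lemma roots_prod_lin {N : ℕ} (f : Fin N → ℝ) :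
    (∏ i, (X - C (f i))).roots = ↑(List.ofFn f) := by
  have h : ∏ i, (X - C (f i))
      = (Multiset.map (fun a => X - C a) ((Finset.univ.val).map f)).prod := by
    simp [Finset.prod, Multiset.map_map]
    rfl
  rw [h, Polynomial.roots_multiset_prod_X_sub_C]
  simp [List.ofFn_eq_map]

lemma spec_charpoly {N : ℕ} {A : Matrix (Fin N) (Fin N) ℝ} (hA : A.IsHermitian) :
    A.charpoly.roots = ↑(List.ofFn hA.eigenvalues) := by
  rw [charpoly_hermitian hA, roots_prod_lin]

lemma diagonal_add_smul_one {N : ℕ} (d : Fin N → ℝ) (c : ℝ) :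
    Matrix.diagonal d + c • (1 : Matrix (Fin N) (Fin N) ℝ)
      = Matrix.diagonal (fun i => d i + c) := by
  rw [← Matrix.diagonal_one, ← Matrix.diagonal_smul, Matrix.diagonal_add]
  simp

lemma charpoly_add_smul_one {N : ℕ} {A : Matrix (Fin N) (Fin N) ℝ} (hA : A.IsHermitian)
    (c : ℝ) :
    (A + c • (1 : Matrix (Fin N) (Fin N) ℝ)).charpoly
      = ∏ i, (X - C (hA.eigenvalues i + c)) := by
  have hU1 : (hA.eigenvectorUnitary : Matrix (Fin N) (Fin N) ℝ)
      * star (hA.eigenvectorUnitary : Matrix (Fin N) (Fin N) ℝ) = 1 :=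
    (Matrix.mem_unitaryGroup_iff).mp hA.eigenvectorUnitary.2
  have hU2 : star (hA.eigenvectorUnitary : Matrix (Fin N) (Fin N) ℝ)
      * (hA.eigenvectorUnitary : Matrix (Fin N) (Fin N) ℝ) = 1 :=
    (Matrix.mem_unitaryGroup_iff').mp hA.eigenvectorUnitary.2
  have hAeq : A + c • (1 : Matrix (Fin N) (Fin N) ℝ)
      = (hA.eigenvectorUnitary : Matrix (Fin N) (Fin N) ℝ)
        * Matrix.diagonal (fun i => hA.eigenvalues i + c)
        * star (hA.eigenvectorUnitary : Matrix (Fin N) (Fin N) ℝ) := by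
    rw [← diagonal_add_smul_one, mul_add, add_mul, ← spectral_real hA]
    congr 1
    rw [Matrix.mul_smul, Matrix.smul_mul, mul_one, hU1]
  rw [hAeq, charpoly_conj _ _ _ hU1 hU2, charpoly_diag_real]

lemma ofFn_dite_append {a b : ℕ} (hab : a ≤ b) (f : Fin a → ℝ) :
    List.ofFn (fun j : Fin b => if h : (j : ℕ) < b - a then (0:ℝ)
        else f ⟨(j : ℕ) - (b - a), by omega⟩)
      = List.replicate (b - a) 0 ++ List.ofFn f := by
  apply List.ext_getElem
  · simp
    omega
  · intro i h1 h2
    simp only [List.getElem_ofFn, List.getElem_append, List.length_replicate,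
      List.getElem_replicate]

lemma pad_eq {a b : ℕ} (hab : a ≤ b) (f : Fin a → ℝ) (g : Fin b → ℝ)
    (hf : Monotone f) (hg : Monotone g) (h0 : ∀ i, 0 ≤ f i)
    (hm : (↑(List.ofFn g) : Multiset ℝ)
        = (↑(List.ofFn f) : Multiset ℝ) + Multiset.replicate (b - a) 0) :
    g = fun j : Fin b => if h : (j : ℕ) < b - a then (0:ℝ)
        else f ⟨(j : ℕ) - (b - a), by omega⟩ := by
  set h : Fin b → ℝ := fun j : Fin b => if h : (j : ℕ) < b - a then (0:ℝ)
      else f ⟨(j : ℕ) - (b - a), by omega⟩ with hh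
  have hmono : Monotone h := by
    intro i j hij
    dsimp [h]
    rcases Nat.lt_or_ge (i : ℕ) (b - a) with hi | hi <;>
      rcases Nat.lt_or_ge (j : ℕ) (b - a) with hj | hj
    · simp [hi, hj]
    · simp only [dif_pos hi, dif_neg (by omega : ¬ (j:ℕ) < b - a)]
      exact h0 _
    · exact absurd (lt_of_le_of_lt (Fin.le_iff_val_le_val.mp hij) hj) (by omega)
    · simp only [dif_neg (by omega : ¬ (i:ℕ) < b - a), dif_neg (by omega : ¬ (j:ℕ) < b - a)]
      exact hf (by simp [Fin.le_iff_val_le_val]; have := Fin.le_iff_val_le_val.mp hij; omega)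
  have hperm : (List.ofFn g).Perm (List.ofFn h) := by
    rw [← Multiset.coe_eq_coe, hm, hh, ofFn_dite_append hab f]
    rw [← Multiset.coe_add]
    exact add_comm _ _
  exact mono_eq_of_perm hg hmono hperm
lemma pad_eq' {a b : ℕ} (hab : a ≤ b) (f : Fin a → ℝ) (g : Fin b → ℝ)
    (hf : Monotone f) (hg : Monotone g) (h0 : ∀ i, 0 ≤ f i)
    (hm : (↑(List.ofFn g) : Multiset ℝ)
        = (↑(List.ofFn f) : Multiset ℝ) + Multiset.replicate (b - a) 0) :
    (∀ j : Fin b, (j : ℕ) < b - a → g j = 0) ∧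
    (∀ (j : Fin b) (j' : Fin a), (j : ℕ) = (j' : ℕ) + (b - a) → g j = f j') := by
  have hpad := pad_eq hab f g hf hg h0 hm
  constructor
  · intro j hj
    rw [hpad]
    exact dif_pos hj
  · intro j j' hjj
    rw [hpad]
    have h1 : ¬ (j : ℕ) < b - a := by omega
    show dite _ _ _ = f j'
    rw [dif_neg h1]
    exact congrArg f (by apply Fin.ext; simp; omega)



lemma vc_mul_transpose {n k s t : ℕ} (G : SimpleGraph (Fin n)) [DecidableRel G.Adj]
    (F : Fin k → Finset (Fin n)) (hF : IsCliquePartition G F)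
    (ht : ∀ i, cliqueDeg F i = t) (hs : ∀ j, (F j).card = s) :
    vcMat F * (vcMat F)ᵀ = G.adjMatrix ℝ + (t : ℝ) • 1 := by
  ext i i'
  have hsum : (vcMat F * (vcMat F)ᵀ) i i'
      = ((Finset.univ.filter fun j => i ∈ F j ∧ i' ∈ F j).card : ℝ) := by
    rw [Matrix.mul_apply]
    rw [← Finset.sum_boole]
    apply Finset.sum_congr rfl
    intro j _
    simp only [vcMat, Matrix.transpose_apply]
    by_cases h1 : i ∈ F j <;> by_cases h2 : i' ∈ F j <;> simp [h1, h2]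
  rw [hsum]
  by_cases hii : i = i'
  · subst hii
    have : (Finset.univ.filter fun j => i ∈ F j ∧ i ∈ F j)
        = (Finset.univ.filter fun j => i ∈ F j) := by
      apply Finset.filter_congr; intro j _; simp
    rw [this]
    have := ht i
    simp only [cliqueDeg] at this
    rw [this]
    simp [Matrix.one_apply, SimpleGraph.adjMatrix]
  · by_cases hadj : G.Adj i i'
    · obtain ⟨j0, hj0, huniq⟩ := hF.2 hadj
      have : (Finset.univ.filter fun j => i ∈ F j ∧ i' ∈ F j) = {j0} := by
        ext j
        simp only [Finset.mem_filter, Finset.mem_univ, true_and, Finset.mem_singleton]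
        exact ⟨fun h => huniq j h, fun h => h ▸ hj0⟩
      rw [this]
      simp [Matrix.one_apply, hii, hadj]
    · have : (Finset.univ.filter fun j => i ∈ F j ∧ i' ∈ F j) = ∅ := by
        ext j
        simp only [Finset.mem_filter, Finset.mem_univ, true_and, Finset.notMem_empty,
          iff_false, not_and]
        intro h1 h2
        exact hadj (hF.1 j h1 h2 hii)
      rw [this]
      simp [Matrix.one_apply, hii, hadj]

lemma transpose_mul_vc {n k s t : ℕ} (G : SimpleGraph (Fin n)) [DecidableRel G.Adj]
    (F : Fin k → Finset (Fin n)) (hF : IsCliquePartition G F)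
    (ht : ∀ i, cliqueDeg F i = t) (hs : ∀ j, (F j).card = s) :
    (vcMat F)ᵀ * vcMat F = pgMat F + (s : ℝ) • 1 := by
  ext j l
  have hsum : ((vcMat F)ᵀ * vcMat F) j l = ((F j ∩ F l).card : ℝ) := by
    rw [Matrix.mul_apply]
    have : (F j ∩ F l).card = (Finset.univ.filter fun i => i ∈ F j ∧ i ∈ F l).card := by
      congr 1
      ext i
      simp [Finset.mem_inter]
    rw [this, ← Finset.sum_boole]
    apply Finset.sum_congr rfl
    intro i _
    simp only [vcMat, Matrix.transpose_apply]
    by_cases h1 : i ∈ F j <;> by_cases h2 : i ∈ F l <;> simp [h1, h2]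
  rw [hsum]
  by_cases hjl : j = l
  · subst hjl
    simp [pgMat, Matrix.one_apply, Finset.inter_self, hs j]
  · have hle : (F j ∩ F l).card ≤ 1 := by
      rw [Finset.card_le_one]
      intro u hu v hv
      by_contra huv
      simp only [Finset.mem_inter] at hu hv
      have hadj : G.Adj u v := hF.1 j hu.1 hv.1 huv
      obtain ⟨j0, _, huniq⟩ := hF.2 hadj
      exact hjl ((huniq j ⟨hu.1, hv.1⟩).trans (huniq l ⟨hu.2, hv.2⟩).symm)
    by_cases hne : (F j ∩ F l).Nonempty
    · have : (F j ∩ F l).card = 1 :=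
        le_antisymm hle (Finset.one_le_card.mpr hne)
      rw [this]
      simp [pgMat, Matrix.one_apply, hjl, hne]
    · rw [Finset.not_nonempty_iff_eq_empty] at hne
      rw [hne]
      simp [pgMat, Matrix.one_apply, hjl, hne]

lemma main_aux {n k : ℕ} (hnk : n ≤ k) {A : Matrix (Fin n) (Fin n) ℝ}
    {Pm : Matrix (Fin k) (Fin k) ℝ} (hA : A.IsHermitian) (hP : Pm.IsHermitian) (c d : ℝ)
    (hkey : (A + c • (1 : Matrix (Fin n) (Fin n) ℝ)).charpoly * X ^ k
        = X ^ n * (Pm + d • (1 : Matrix (Fin k) (Fin k) ℝ)).charpoly)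
    (hpsd : (A + c • (1 : Matrix (Fin n) (Fin n) ℝ)).PosSemidef) :
    (∀ (i : ℕ) (hin : i < n) (hik : i < k),
      (hA.eigenvalues ∘ Tuple.sort hA.eigenvalues) (Fin.rev ⟨i, hin⟩) + c
        = (hP.eigenvalues ∘ Tuple.sort hP.eigenvalues) (Fin.rev ⟨i, hik⟩) + d) ∧
    (∀ (i : ℕ) (hik : i < k), n ≤ i →
      (hP.eigenvalues ∘ Tuple.sort hP.eigenvalues) (Fin.rev ⟨i, hik⟩) + d = 0) := by
  set a : Fin n → ℝ := hA.eigenvalues ∘ Tuple.sort hA.eigenvalues with ha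
  set p : Fin k → ℝ := hP.eigenvalues ∘ Tuple.sort hP.eigenvalues with hp
  set α : Fin n → ℝ := fun i => a i + c with hα
  set β : Fin k → ℝ := fun i => p i + d with hβ
  have hmonoa : Monotone a := Tuple.monotone_sort _
  have hmonop : Monotone p := Tuple.monotone_sort _
  have hmonoα : Monotone α := fun i j hij => add_le_add_left (hmonoa hij) c
  have hmonoβ : Monotone β := fun i j hij => add_le_add_left (hmonop hij) d
  have hrootsB : (A + c • (1 : Matrix (Fin n) (Fin n) ℝ)).charpoly.roots
      = ↑(List.ofFn fun i => hA.eigenvalues i + c) := by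
    rw [charpoly_add_smul_one hA c, roots_prod_lin]
  have hrootsC : (Pm + d • (1 : Matrix (Fin k) (Fin k) ℝ)).charpoly.roots
      = ↑(List.ofFn fun i => hP.eigenvalues i + d) := by
    rw [charpoly_add_smul_one hP d, roots_prod_lin]
  have hpermα : (List.ofFn α).Perm (List.ofFn fun i => hA.eigenvalues i + c) := by
    have e1 : List.ofFn α = (List.ofFn a).map (fun x => x + c) := by
      rw [List.map_ofFn]; rfl
    have e2 : (List.ofFn fun i => hA.eigenvalues i + c)
        = (List.ofFn hA.eigenvalues).map (fun x => x + c) := by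
      rw [List.map_ofFn]; rfl
    rw [e1, e2]
    exact ((Tuple.sort hA.eigenvalues).ofFn_comp_perm hA.eigenvalues).map _
  have hpermβ : (List.ofFn β).Perm (List.ofFn fun i => hP.eigenvalues i + d) := by
    have e1 : List.ofFn β = (List.ofFn p).map (fun x => x + d) := by
      rw [List.map_ofFn]; rfl
    have e2 : (List.ofFn fun i => hP.eigenvalues i + d)
        = (List.ofFn hP.eigenvalues).map (fun x => x + d) := by
      rw [List.map_ofFn]; rfl
    rw [e1, e2]
    exact ((Tuple.sort hP.eigenvalues).ofFn_comp_perm hP.eigenvalues).map _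
  have hμ : (↑(List.ofFn α) : Multiset ℝ) + Multiset.replicate k 0
      = (↑(List.ofFn β) : Multiset ℝ) + Multiset.replicate n 0 := by
    have h0 := congrArg Polynomial.roots hkey
    rw [Polynomial.roots_mul (mul_ne_zero (Matrix.charpoly_monic _).ne_zero
        (pow_ne_zero _ Polynomial.X_ne_zero)),
      Polynomial.roots_mul (mul_ne_zero (pow_ne_zero _ Polynomial.X_ne_zero)
        (Matrix.charpoly_monic _).ne_zero),
      Polynomial.roots_pow, Polynomial.roots_pow, Polynomial.roots_X,
      Multiset.nsmul_singleton, Multiset.nsmul_singleton, hrootsB, hrootsC] at h0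
    rw [Multiset.coe_eq_coe.mpr hpermα, Multiset.coe_eq_coe.mpr hpermβ]
    rw [h0, add_comm]
  have hα0 : ∀ i, 0 ≤ α i := by
    intro i
    have hmem : α i ∈ (↑(List.ofFn α) : Multiset ℝ) := by
      rw [Multiset.mem_coe]
      exact List.mem_ofFn.mpr ⟨i, rfl⟩
    rw [Multiset.coe_eq_coe.mpr hpermα, ← hrootsB, spec_charpoly hpsd.1] at hmem
    rw [Multiset.mem_coe, List.mem_ofFn] at hmem
    obtain ⟨j, hj⟩ := hmem
    rw [← hj]
    exact hpsd.eigenvalues_nonneg j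
  have hm' : (↑(List.ofFn β) : Multiset ℝ)
      = (↑(List.ofFn α) : Multiset ℝ) + Multiset.replicate (k - n) 0 := by
    have hrep : Multiset.replicate k (0:ℝ)
        = Multiset.replicate (k - n) 0 + Multiset.replicate n 0 := by
      rw [← Multiset.replicate_add]
      congr 1
      omega
    have h2 := hμ
    rw [hrep, ← add_assoc] at h2
    exact (add_right_cancel h2.symm)
  have hpad := pad_eq' hnk α β hmonoα hmonoβ hα0 hm'
  constructor
  · intro i hin hik
    have hrevk : (Fin.rev ⟨i, hik⟩ : Fin k) = ⟨k - 1 - i, by omega⟩ := by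
      ext; simp [Fin.val_rev]; omega
    have hrevn : (Fin.rev ⟨i, hin⟩ : Fin n) = ⟨n - 1 - i, by omega⟩ := by
      ext; simp [Fin.val_rev]; omega
    have hβv : β ⟨k - 1 - i, by omega⟩ = α ⟨n - 1 - i, by omega⟩ :=
      hpad.2 ⟨k - 1 - i, by omega⟩ ⟨n - 1 - i, by omega⟩ (by simp; omega)
    rw [hrevk, hrevn]
    exact hβv.symm
  · intro i hik hni
    have hrevk : (Fin.rev ⟨i, hik⟩ : Fin k) = ⟨k - 1 - i, by omega⟩ := by
      ext; simp [Fin.val_rev]; omega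
    have hβv : β ⟨k - 1 - i, by omega⟩ = 0 :=
      hpad.1 ⟨k - 1 - i, by omega⟩ (by simp; omega)
    rw [hrevk]
    exact hβv

theorem stmt_3 {n k s t : ℕ} (G : SimpleGraph (Fin n)) [DecidableRel G.Adj]
    (F : Fin k → Finset (Fin n)) (hF : IsCliquePartition G F)
    (ht : ∀ i, cliqueDeg F i = t) (hs : ∀ j, (F j).card = s) :
    (∀ (i : ℕ) (hin : i < n) (hik : i < k),
        eigsDesc (G.adjMatrix ℝ) ⟨i, hin⟩ - eigsDesc (pgMat F) ⟨i, hik⟩ = (s : ℝ) - t) ∧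
    (n ≤ k → ∀ (i : ℕ) (hik : i < k), n ≤ i →
        eigsDesc (pgMat F) ⟨i, hik⟩ = -(s : ℝ)) ∧
    (k ≤ n → ∀ (i : ℕ) (hin : i < n), k ≤ i →
        eigsDesc (G.adjMatrix ℝ) ⟨i, hin⟩ = -(t : ℝ)) := by
  classical
  have hA1 : (G.adjMatrix ℝ).IsHermitian := by
    have h := SimpleGraph.isSymm_adjMatrix (α := ℝ) (G := G)
    show (G.adjMatrix ℝ)ᴴ = G.adjMatrix ℝ
    rw [Matrix.conjTranspose_eq_transpose_of_trivial]
    exact h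
  have hP : (pgMat F).IsHermitian := by
    show (pgMat F)ᴴ = pgMat F
    rw [Matrix.conjTranspose_eq_transpose_of_trivial]
    ext j l
    simp only [Matrix.transpose_apply, pgMat]
    exact if_congr (by rw [Finset.inter_comm]; exact and_congr ne_comm Iff.rfl) rfl rfl
  have hNH : (vcMat F)ᴴ = (vcMat F)ᵀ := Matrix.conjTranspose_eq_transpose_of_trivial _
  have h1 := vc_mul_transpose G F hF ht hs
  have h2 := transpose_mul_vc G F hF ht hs
  have hBpsd : (G.adjMatrix ℝ + (t : ℝ) • 1).PosSemidef := by
    rw [← h1, ← hNH]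
    exact Matrix.posSemidef_self_mul_conjTranspose _
  have hCpsd : (pgMat F + (s : ℝ) • 1).PosSemidef := by
    rw [← h2, ← hNH]
    exact Matrix.posSemidef_conjTranspose_mul_self _
  have hkey : (G.adjMatrix ℝ + (t : ℝ) • 1).charpoly * X ^ k
      = X ^ n * (pgMat F + (s : ℝ) • 1).charpoly := by
    rw [← h1, ← h2]
    exact charpoly_mul_transpose_comm (vcMat F)
  have hkey' : (pgMat F + (s : ℝ) • 1).charpoly * X ^ n
      = X ^ k * (G.adjMatrix ℝ + (t : ℝ) • 1).charpoly := by
    rw [← h1, ← h2]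
    have := charpoly_mul_transpose_comm (vcMat F)ᵀ
    simpa [Matrix.transpose_transpose] using this
  have eA : ∀ (i : ℕ) (hin : i < n), eigsDesc (G.adjMatrix ℝ) ⟨i, hin⟩
      = (hA1.eigenvalues ∘ Tuple.sort hA1.eigenvalues) (Fin.rev ⟨i, hin⟩) := by
    intro i hin
    simp only [eigsDesc]
    rw [dif_pos hA1]
  have eP : ∀ (i : ℕ) (hik : i < k), eigsDesc (pgMat F) ⟨i, hik⟩
      = (hP.eigenvalues ∘ Tuple.sort hP.eigenvalues) (Fin.rev ⟨i, hik⟩) := by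
    intro i hik
    simp only [eigsDesc]
    rw [dif_pos hP]
  refine ⟨?_, ?_, ?_⟩
  · intro i hin hik
    rw [eA i hin, eP i hik]
    rcases le_total n k with hle | hle
    · have := (main_aux hle hA1 hP (t : ℝ) (s : ℝ) hkey hBpsd).1 i hin hik
      linarith
    · have := (main_aux hle hP hA1 (s : ℝ) (t : ℝ) hkey' hCpsd).1 i hik hin
      linarith
  · intro hnk i hik hni
    rw [eP i hik]
    have := (main_aux hnk hA1 hP (t : ℝ) (s : ℝ) hkey hBpsd).2 i hik hni
    linarith
  · intro hkn i hin hki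
    rw [eA i hin]
    have := (main_aux hkn hP hA1 (s : ℝ) (t : ℝ) hkey' hCpsd).2 i hin hki
    linarith
end

section
/- Let G be a simple graph on n vertices with negative inertia ν^− and let F be a clique partition of G with clique-degrees t_1^F ≥ t_2^F ≥ ... ≥ t_n^F. Then for all 1 ≤ i ≤ ν^−, λ_{n−i+1}(G) ≥ −t_i^F. Moreover, if G is clique-regular with respect to F and ν^− = n − |F|, then equality holds for all 1 ≤ i ≤ ν^−. -/
open Matrix Finset

section Aux

variable {n k : ℕ}

variable {n k : ℕ}

lemma sum_dotProduct' {ι : Type*} (s : Finset ι) (f : ι → Fin n → ℝ) (y : Fin n → ℝ) :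
    (∑ j ∈ s, f j) ⬝ᵥ y = ∑ j ∈ s, f j ⬝ᵥ y := by
  simp only [dotProduct, Finset.sum_apply, Finset.sum_mul]
  exact Finset.sum_comm

lemma dotProduct_sum' {ι : Type*} (s : Finset ι) (y : Fin n → ℝ) (f : ι → Fin n → ℝ) :
    y ⬝ᵥ (∑ j ∈ s, f j) = ∑ j ∈ s, y ⬝ᵥ f j := by
  simp only [dotProduct, Finset.sum_apply, Finset.mul_sum]
  exact Finset.sum_comm

lemma dv {M : Matrix (Fin n) (Fin n) ℝ} (hM : M.IsHermitian) (j l : Fin n) :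
    ⇑(hM.eigenvectorBasis j) ⬝ᵥ ⇑(hM.eigenvectorBasis l) = if j = l then 1 else 0 := by
  have := orthonormal_iff_ite.mp hM.eigenvectorBasis.orthonormal j l
  simpa [PiLp.inner_apply, RCLike.inner_apply, dotProduct, mul_comm] using this

lemma dot_single {M : Matrix (Fin n) (Fin n) ℝ} (hM : M.IsHermitian) (T : Finset (Fin n))
    (e : ↥T → ℝ) (l : ↥T) :
    ⇑(hM.eigenvectorBasis ↑l) ⬝ᵥ (∑ j : ↥T, e j • ⇑(hM.eigenvectorBasis ↑j)) = e l := by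
  rw [dotProduct_sum']
  simp only [dotProduct_smul, dv hM, smul_eq_mul, mul_ite, mul_one, mul_zero,
    Subtype.coe_inj]
  simp [Finset.sum_ite_eq]

lemma dot_comb {M : Matrix (Fin n) (Fin n) ℝ} (hM : M.IsHermitian) (T : Finset (Fin n))
    (c e : ↥T → ℝ) :
    (∑ j : ↥T, c j • ⇑(hM.eigenvectorBasis ↑j)) ⬝ᵥ (∑ l : ↥T, e l • ⇑(hM.eigenvectorBasis ↑l))
      = ∑ j : ↥T, c j * e j := by
  rw [sum_dotProduct']
  refine Finset.sum_congr rfl fun j _ => ?_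
  rw [smul_dotProduct, dot_single hM T e j, smul_eq_mul]

lemma mulVec_comb {M : Matrix (Fin n) (Fin n) ℝ} (hM : M.IsHermitian) (T : Finset (Fin n))
    (c : ↥T → ℝ) :
    M *ᵥ (∑ j : ↥T, c j • ⇑(hM.eigenvectorBasis ↑j))
      = ∑ j : ↥T, (c j * hM.eigenvalues ↑j) • ⇑(hM.eigenvectorBasis ↑j) := by
  rw [← Matrix.mulVecLin_apply, map_sum]
  refine Finset.sum_congr rfl fun j _ => ?_
  rw [LinearMap.map_smul, Matrix.mulVecLin_apply, hM.mulVec_eigenvectorBasis, smul_smul, mul_comm]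

/-- If `M = P + diagonal d` with `P` PSD, then the number of eigenvalues of `M` below `-t`
is at most the number of diagonal entries below `-t`. -/
lemma key1 {M P : Matrix (Fin n) (Fin n) ℝ} (hM : M.IsHermitian) (hP : P.PosSemidef)
    (d : Fin n → ℝ) (hMP : M = P + Matrix.diagonal d) (t : ℝ) :
    ((univ : Finset (Fin n)).filter fun j => hM.eigenvalues j < -t).card ≤
      (univ.filter fun u => d u < -t).card := by
  classical
  set Nt := (univ : Finset (Fin n)).filter fun j => hM.eigenvalues j < -t with hNt
  set S := (univ : Finset (Fin n)).filter fun u => d u < -t with hS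
  set v : Fin n → (Fin n → ℝ) := fun j => ⇑(hM.eigenvectorBasis j) with hv
  have hli : LinearIndependent ℝ (fun (j : ↥Nt) => fun (s : ↥S) => v ↑j ↑s) := by
    rw [Fintype.linearIndependent_iff]
    intro c hc
    by_contra hne
    push_neg at hne
    obtain ⟨j0, hj0⟩ := hne
    set x : Fin n → ℝ := ∑ j : ↥Nt, c j • v ↑j with hx
    have hxS : ∀ s : Fin n, s ∈ S → x s = 0 := by
      intro s hs
      have := congrFun hc ⟨s, hs⟩
      simpa [hx, Finset.sum_apply] using this
    have hxx : x ⬝ᵥ x = ∑ j : ↥Nt, c j * c j := dot_comb hM Nt c c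
    have hxMx : x ⬝ᵥ (M *ᵥ x) = ∑ j : ↥Nt, hM.eigenvalues ↑j * (c j * c j) := by
      rw [hx, mulVec_comb hM Nt c, dot_comb hM Nt c _]
      exact Finset.sum_congr rfl fun j _ => by ring
    have hub : x ⬝ᵥ (M *ᵥ x) < -t * (x ⬝ᵥ x) := by
      rw [hxMx, hxx, Finset.mul_sum]
      refine Finset.sum_lt_sum (fun j _ => ?_) ⟨j0, Finset.mem_univ _, ?_⟩
      · have hj : hM.eigenvalues ↑j < -t := (Finset.mem_filter.mp j.2).2
        exact mul_le_mul_of_nonneg_right hj.le (mul_self_nonneg _)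
      · have hj : hM.eigenvalues ↑j0 < -t := (Finset.mem_filter.mp j0.2).2
        exact mul_lt_mul_of_pos_right hj (mul_self_pos.mpr hj0)
    have hlb : -t * (x ⬝ᵥ x) ≤ x ⬝ᵥ (M *ᵥ x) := by
      rw [hMP, Matrix.add_mulVec, dotProduct_add]
      have h1 : 0 ≤ x ⬝ᵥ (P *ᵥ x) := by
        have := hP.re_dotProduct_nonneg x
        simpa using this
      have h2 : -t * (x ⬝ᵥ x) ≤ x ⬝ᵥ (Matrix.diagonal d *ᵥ x) := by
        have hxds : x ⬝ᵥ (Matrix.diagonal d *ᵥ x) = ∑ u, x u * (d u * x u) := by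
          simp [dotProduct, Matrix.mulVec_diagonal]
        have hxxs : -t * (x ⬝ᵥ x) = ∑ u, -t * (x u * x u) := by
          simp [dotProduct, Finset.mul_sum]
        rw [hxds, hxxs]
        refine Finset.sum_le_sum fun u _ => ?_
        by_cases hu : u ∈ S
        · rw [hxS u hu]; ring_nf; exact le_refl _
        · have hdu : -t ≤ d u := by
            rw [hS, Finset.mem_filter] at hu
            push_neg at hu
            exact hu (Finset.mem_univ u)
          calc -t * (x u * x u) ≤ d u * (x u * x u) :=
                mul_le_mul_of_nonneg_right hdu (mul_self_nonneg _)
            _ = x u * (d u * x u) := by ring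
      linarith
    linarith
  have := hli.fintype_card_le_finrank
  simpa [Module.finrank_fintype_fun_eq_card, Fintype.card_coe] using this

/-- If `M + t•I = B * Bᵀ`, then at most `k` eigenvalues of `M` differ from `-t`. -/
lemma key2 {M : Matrix (Fin n) (Fin n) ℝ} (hM : M.IsHermitian) (B : Matrix (Fin n) (Fin k) ℝ)
    (t : ℝ) (h : M + Matrix.diagonal (fun _ => t) = B * Bᵀ) :
    ((univ : Finset (Fin n)).filter fun j => hM.eigenvalues j ≠ -t).card ≤ k := by
  classical
  set Nt := (univ : Finset (Fin n)).filter fun j => hM.eigenvalues j ≠ -t with hNt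
  set v : Fin n → (Fin n → ℝ) := fun j => ⇑(hM.eigenvectorBasis j) with hv
  have hli : LinearIndependent ℝ (fun (j : ↥Nt) => Bᵀ *ᵥ v ↑j) := by
    rw [Fintype.linearIndependent_iff]
    intro c hc l
    set x : Fin n → ℝ := ∑ j : ↥Nt, c j • v ↑j with hx
    have hBx : Bᵀ *ᵥ x = 0 := by
      rw [hx, ← Matrix.mulVecLin_apply, map_sum]
      rw [← hc]
      refine Finset.sum_congr rfl fun j _ => ?_
      rw [LinearMap.map_smul, Matrix.mulVecLin_apply]
    have hMx : M *ᵥ x = (-t) • x := by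
      have h1 : (M + Matrix.diagonal fun _ => t) *ᵥ x = 0 := by
        rw [h, ← Matrix.mulVec_mulVec, hBx, Matrix.mulVec_zero]
      rw [Matrix.add_mulVec] at h1
      have h2 : Matrix.diagonal (fun _ => t) *ᵥ x = t • x := by
        ext u; simp [Matrix.mulVec_diagonal]
      rw [h2] at h1
      have := eq_neg_of_add_eq_zero_left h1
      rw [this]; ext u; simp
    have e1 : v ↑l ⬝ᵥ (M *ᵥ x) = hM.eigenvalues ↑l * c l := by
      rw [hx, mulVec_comb hM Nt c, dot_single hM Nt _ l]
      ring
    have e2 : v ↑l ⬝ᵥ ((-t) • x) = -t * c l := by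
      have : (-t) • x = ∑ j : ↥Nt, (-t * c j) • v ↑j := by
        rw [hx, Finset.smul_sum]
        refine Finset.sum_congr rfl fun j _ => by rw [smul_smul]
      rw [this, dot_single hM Nt _ l]
    have hl : hM.eigenvalues ↑l ≠ -t := (Finset.mem_filter.mp l.2).2
    have heq : hM.eigenvalues ↑l * c l = -t * c l := by rw [← e1, ← e2, hMx]
    by_contra hcl
    exact hl (mul_right_cancel₀ hcl heq)
  have := hli.fintype_card_le_finrank
  simpa [Module.finrank_fintype_fun_eq_card, Fintype.card_coe] using this


lemma clique_mat {G : SimpleGraph (Fin n)} [DecidableRel G.Adj] {F : Fin k → Finset (Fin n)}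
    (hF : IsCliquePartition G F) :
    vcMat F * (vcMat F)ᵀ = G.adjMatrix ℝ + Matrix.diagonal (fun u => (cliqueDeg F u : ℝ)) := by
  classical
  ext u w
  have hentry : (vcMat F * (vcMat F)ᵀ) u w
      = ((univ.filter fun j => u ∈ F j ∧ w ∈ F j).card : ℝ) := by
    rw [Matrix.mul_apply, ← Finset.sum_boole]
    refine Finset.sum_congr rfl fun j _ => ?_
    simp only [vcMat, Matrix.transpose_apply]
    split_ifs with h1 h2 h3 h4 h5 <;> simp_all
  by_cases huw : u = w
  · subst huw
    have : (univ.filter fun j => u ∈ F j ∧ u ∈ F j) = univ.filter fun j => u ∈ F j := by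
      simp
    rw [hentry, this]
    simp [cliqueDeg, Matrix.diagonal_apply_eq]
  · rw [hentry]
    by_cases hadj : G.Adj u w
    · obtain ⟨j0, hj0, huniq⟩ := hF.2 hadj
      have : (univ.filter fun j => u ∈ F j ∧ w ∈ F j) = {j0} := by
        ext j
        simp only [Finset.mem_filter, Finset.mem_univ, true_and, Finset.mem_singleton]
        exact ⟨fun h => huniq j h, fun h => h ▸ hj0⟩
      rw [this]
      simp [Matrix.diagonal_apply_ne _ huw, hadj]
    · have : (univ.filter fun j => u ∈ F j ∧ w ∈ F j) = ∅ := by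
        ext j
        simp only [Finset.mem_filter, Finset.mem_univ, true_and, Finset.notMem_empty,
          iff_false]
        rintro ⟨h1, h2⟩
        exact hadj (hF.1 j h1 h2 huw)
      rw [this]
      simp [Matrix.diagonal_apply_ne _ huw, hadj]

lemma adj_herm (G : SimpleGraph (Fin n)) [DecidableRel G.Adj] : (G.adjMatrix ℝ).IsHermitian := by
  ext i j
  simp [Matrix.conjTranspose_apply, G.adj_comm]

lemma card_filter_perm {N : ℕ} (e : Equiv.Perm (Fin N)) (P : Fin N → Prop) [DecidablePred P] :
    ((univ : Finset (Fin N)).filter fun p => P (e p)).card = (univ.filter P).card := by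
  rw [← Fintype.card_subtype, ← Fintype.card_subtype]
  exact Fintype.card_congr (e.subtypeEquiv fun x => Iff.rfl)

lemma mono_low {N : ℕ} {g : Fin N → ℝ} (hg : Monotone g) (i : Fin N)
    (hi : (i : ℕ) < ((univ : Finset (Fin N)).filter fun p => g p < 0).card) : g i < 0 := by
  by_contra h
  push_neg at h
  have hsub : ((univ : Finset (Fin N)).filter fun p => g p < 0) ⊆ Finset.Iio i := by
    intro p hp
    rw [Finset.mem_filter] at hp
    rw [Finset.mem_Iio]
    by_contra hpi
    push_neg at hpi
    exact absurd (le_trans h (hg hpi)) (not_le.mpr hp.2)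
  have := Finset.card_le_card hsub
  rw [Fin.card_Iio] at this
  omega

lemma main_ineq {G : SimpleGraph (Fin n)} [DecidableRel G.Adj] {F : Fin k → Finset (Fin n)}
    (hF : IsCliquePartition G F) (hA : (G.adjMatrix ℝ).IsHermitian) (i : Fin n) :
    -(sortedDesc (cliqueDeg F) i : ℝ) ≤ (hA.eigenvalues ∘ Tuple.sort hA.eigenvalues) i := by
  classical
  set g := cliqueDeg F with hg
  set t : ℝ := (sortedDesc g i : ℝ) with ht
  by_contra hcon
  push_neg at hcon
  have h1 : (i : ℕ) + 1 ≤ ((univ : Finset (Fin n)).filter fun j => hA.eigenvalues j < -t).card := by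
    rw [← card_filter_perm (Tuple.sort hA.eigenvalues) (fun j => hA.eigenvalues j < -t)]
    have hsub : Finset.Iic i ⊆
        (univ.filter fun p => hA.eigenvalues (Tuple.sort hA.eigenvalues p) < -t) := by
      intro p hp
      rw [Finset.mem_Iic] at hp
      rw [Finset.mem_filter]
      exact ⟨Finset.mem_univ _, lt_of_le_of_lt (Tuple.monotone_sort hA.eigenvalues hp) hcon⟩
    have := Finset.card_le_card hsub
    rwa [Fin.card_Iic] at this
  have h2 : ((univ : Finset (Fin n)).filter
      fun u => -((g u : ℝ)) < -t).card ≤ (i : ℕ) := by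
    have hpred : ∀ u ∈ (univ : Finset (Fin n)),
        (-((g u : ℝ)) < -t ↔ g (Tuple.sort g i.rev) < g u) := by
      intro u _
      rw [neg_lt_neg_iff, ht]
      exact_mod_cast Iff.rfl
    rw [Finset.filter_congr hpred,
      ← card_filter_perm (Tuple.sort g) (fun u => g (Tuple.sort g i.rev) < g u)]
    have hsub : (univ.filter fun p => g (Tuple.sort g i.rev) < g (Tuple.sort g p)) ⊆
        Finset.Ioi i.rev := by
      intro p hp
      rw [Finset.mem_filter] at hp
      rw [Finset.mem_Ioi]
      by_contra hpi
      push_neg at hpi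
      exact absurd (Tuple.monotone_sort g hpi) (not_le.mpr hp.2)
    have := Finset.card_le_card hsub
    rw [Fin.card_Ioi] at this
    have hrev : (i.rev : ℕ) = n - 1 - (i : ℕ) := by
      rw [Fin.val_rev]; omega
    omega
  have hMP : G.adjMatrix ℝ = (vcMat F * (vcMat F)ᵀ) +
      Matrix.diagonal (fun u => -((g u : ℝ))) := by
    have h := clique_mat hF
    have hdn : Matrix.diagonal (fun u => -((g u : ℝ)))
        = -Matrix.diagonal (fun u => ((g u : ℝ))) := by
      rw [← Matrix.diagonal_neg]
    rw [hdn, eq_add_neg_iff_add_eq]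
    exact h.symm
  have hPSD : (vcMat F * (vcMat F)ᵀ).PosSemidef := by
    have := Matrix.posSemidef_self_mul_conjTranspose (vcMat F)
    rwa [Matrix.conjTranspose_eq_transpose_of_trivial] at this
  have h3 := key1 hA hPSD (fun u => -((g u : ℝ))) hMP t
  beta_reduce at h3
  omega


lemma eigsDesc_rev {N : ℕ} (A : Matrix (Fin N) (Fin N) ℝ) (hA : A.IsHermitian) (i : Fin N) :
    eigsDesc A ⟨N - 1 - (i : ℕ), Nat.lt_of_le_of_lt (Nat.sub_le _ _) (by have := i.isLt; omega)⟩
      = (hA.eigenvalues ∘ Tuple.sort hA.eigenvalues) i := by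
  rw [eigsDesc, dif_pos hA]
  congr 1
  ext
  rw [Fin.val_rev]
  have := i.isLt
  simp
  omega

end Aux

theorem stmt_9 {n k : ℕ} (G : SimpleGraph (Fin n)) [DecidableRel G.Adj]
    (F : Fin k → Finset (Fin n)) (hF : IsCliquePartition G F) :
    (∀ i : Fin n, (i : ℕ) < negInertia (G.adjMatrix ℝ) →
      -(sortedDesc (cliqueDeg F) i : ℝ) ≤
        eigsDesc (G.adjMatrix ℝ) ⟨n - 1 - (i : ℕ), by have := i.isLt; omega⟩) ∧
    ((∀ a b, cliqueDeg F a = cliqueDeg F b) → negInertia (G.adjMatrix ℝ) = n - k →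
      ∀ i : Fin n, (i : ℕ) < negInertia (G.adjMatrix ℝ) →
        eigsDesc (G.adjMatrix ℝ) ⟨n - 1 - (i : ℕ), by have := i.isLt; omega⟩ =
          -(sortedDesc (cliqueDeg F) i : ℝ)) := by
  classical
  have hA := adj_herm G
  constructor
  · intro i _
    rw [eigsDesc_rev _ hA i]
    exact main_ineq hF hA i
  · intro hreg hnu i hi
    rw [eigsDesc_rev _ hA i]
    set t0 : ℕ := sortedDesc (cliqueDeg F) i with ht0
    have hdeg : ∀ u, cliqueDeg F u = t0 := fun u =>
      hreg u (Tuple.sort (cliqueDeg F) i.rev)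
    have hBB : G.adjMatrix ℝ + Matrix.diagonal (fun _ : Fin n => (t0 : ℝ))
        = vcMat F * (vcMat F)ᵀ := by
      have hfun : (fun u : Fin n => (cliqueDeg F u : ℝ)) = fun _ => (t0 : ℝ) := by
        funext u
        rw [hdeg u]
      rw [clique_mat hF, hfun]
    have hk2 := key2 hA (vcMat F) (t0 : ℝ) hBB
    have hge : ∀ j, -(t0 : ℝ) ≤ hA.eigenvalues j := by
      intro j
      have h := main_ineq hF hA ((Tuple.sort hA.eigenvalues).symm j)
      have hs : sortedDesc (cliqueDeg F) ((Tuple.sort hA.eigenvalues).symm j) = t0 :=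
        hdeg _
      rw [hs] at h
      simpa using h
    have hnucard : negInertia (G.adjMatrix ℝ)
        = ((univ : Finset (Fin n)).filter fun j => hA.eigenvalues j < 0).card := by
      rw [negInertia, dif_pos hA]
    have hneg : (hA.eigenvalues ∘ Tuple.sort hA.eigenvalues) i < 0 := by
      apply mono_low (Tuple.monotone_sort hA.eigenvalues) i
      have h := hi
      rw [hnucard,
        ← card_filter_perm (Tuple.sort hA.eigenvalues) (fun j => hA.eigenvalues j < 0)] at h
      exact h
    have hnegi : hA.eigenvalues (Tuple.sort hA.eigenvalues i) < 0 := hneg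
    have ht0pos : (0 : ℝ) < (t0 : ℝ) := by
      have := hge (Tuple.sort hA.eigenvalues i)
      linarith
    have hsub : ((univ : Finset (Fin n)).filter fun j => hA.eigenvalues j = -(t0 : ℝ))
        ⊆ (univ.filter fun j => hA.eigenvalues j < 0) := by
      intro j hj
      rw [Finset.mem_filter] at hj ⊢
      exact ⟨hj.1, by rw [hj.2]; linarith⟩
    have hsplit := Finset.card_filter_add_card_filter_not
      (s := (univ : Finset (Fin n))) (p := fun j => hA.eigenvalues j = -(t0 : ℝ))
    have hk2' : ((univ : Finset (Fin n)).filter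
        fun j => ¬(hA.eigenvalues j = -(t0 : ℝ))).card ≤ k := hk2
    have hcardle : ((univ : Finset (Fin n)).filter
        fun j => hA.eigenvalues j < 0).card ≤
        ((univ : Finset (Fin n)).filter fun j => hA.eigenvalues j = -(t0 : ℝ)).card := by
      rw [← hnucard] at *
      rw [Finset.card_univ, Fintype.card_fin] at hsplit
      omega
    have hset := Finset.eq_of_subset_of_card_le hsub hcardle
    have hmem : Tuple.sort hA.eigenvalues i ∈
        (univ : Finset (Fin n)).filter fun j => hA.eigenvalues j < 0 :=
      Finset.mem_filter.mpr ⟨Finset.mem_univ _, hnegi⟩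
    rw [← hset, Finset.mem_filter] at hmem
    exact hmem.2
end

section
/- Let G be a simple graph on n vertices with a clique partition F = {C_1, ..., C_k}, where |C_i| = s_i^F and s_1^F ≥ s_2^F ≥ ... ≥ s_k^F. Then the smallest adjacency eigenvalue of the clique partition graph satisfies λ_k(P_G) ≥ −s_1^F. Moreover, if all cliques of F have the same size s_1^F (G is s_1^F clique-uniform) and k > n, then λ_k(P_G) = −s_1^F. -/
open Matrix Finset

lemma pgMat_isHermitian {n k : ℕ} (F : Fin k → Finset (Fin n)) : (pgMat F).IsHermitian := by
  ext j l
  simp only [Matrix.conjTranspose_apply, pgMat, star_trivial]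
  by_cases h : j = l
  · simp [h]
  · simp only [Ne, h, Ne.symm h, not_false_iff, true_and]
    rw [Finset.inter_comm]

lemma key_identity {n k : ℕ} (G : SimpleGraph (Fin n)) (F : Fin k → Finset (Fin n))
    (hF : IsCliquePartition G F) :
    (vcMat F)ᴴ * vcMat F = pgMat F + Matrix.diagonal (fun j => ((F j).card : ℝ)) := by
  ext j l
  have hL : ((vcMat F)ᴴ * vcMat F) j l = ((F j ∩ F l).card : ℝ) := by
    simp only [Matrix.mul_apply, Matrix.conjTranspose_apply, vcMat, star_trivial]
    have : ∀ i : Fin n, (if i ∈ F j then (1:ℝ) else 0) * (if i ∈ F l then 1 else 0)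
        = if i ∈ F j ∩ F l then 1 else 0 := by
      intro i
      by_cases h1 : i ∈ F j <;> by_cases h2 : i ∈ F l <;> simp [h1, h2]
    rw [Finset.sum_congr rfl fun i _ => this i, Finset.sum_ite_mem, Finset.univ_inter,
      Finset.sum_const, nsmul_eq_mul, mul_one]
  rw [hL]
  by_cases h : j = l
  · subst h
    simp [pgMat, Matrix.add_apply]
  · have hcard : (F j ∩ F l).card ≤ 1 := by
      rw [Finset.card_le_one]
      intro u hu v hv
      by_contra huv
      have hu' := Finset.mem_inter.mp hu
      have hv' := Finset.mem_inter.mp hv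
      have hadj : G.Adj u v := hF.1 j hu'.1 hv'.1 huv
      obtain ⟨m, _, hm⟩ := hF.2 hadj
      exact h ((hm j ⟨hu'.1, hv'.1⟩).trans (hm l ⟨hu'.2, hv'.2⟩).symm)
    simp only [Matrix.add_apply, pgMat, Matrix.diagonal_apply_ne _ h, add_zero, Ne, h,
      not_false_iff, true_and]
    by_cases hne : (F j ∩ F l).Nonempty
    · rw [if_pos hne]
      have : (F j ∩ F l).card = 1 := le_antisymm hcard (Finset.card_pos.mpr hne)
      rw [this]; norm_num
    · rw [if_neg hne]
      rw [Finset.not_nonempty_iff_eq_empty] at hne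
      rw [hne]; simp

lemma eig_ge_of_shift_psd {k : ℕ} {A : Matrix (Fin k) (Fin k) ℝ} (hA : A.IsHermitian) (c : ℝ)
    (h : (A + Matrix.diagonal (fun _ => c)).PosSemidef) (i : Fin k) : -c ≤ hA.eigenvalues i := by
  set v : Fin k → ℝ := ⇑(hA.eigenvectorBasis i) with hv
  have hnorm : star v ⬝ᵥ v = 1 := by
    have h1 : ‖hA.eigenvectorBasis i‖ = 1 := hA.eigenvectorBasis.orthonormal.1 i
    have h2 : (inner ℝ (hA.eigenvectorBasis i) (hA.eigenvectorBasis i) : ℝ) = 1 := by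
      rw [real_inner_self_eq_norm_sq, h1]; norm_num
    rw [← h2]
    simp [dotProduct, PiLp.inner_apply, v, mul_comm]
    have h3 := h2
    rw [PiLp.inner_apply] at h3
    refine Eq.trans (Finset.sum_congr rfl fun x _ => ?_) h3
    simp [sq]
  have h2 := h.dotProduct_mulVec_nonneg v
  rw [Matrix.add_mulVec, hA.mulVec_eigenvectorBasis, dotProduct_add, dotProduct_smul] at h2
  have hdiag : star v ⬝ᵥ (Matrix.diagonal (fun _ => c) *ᵥ v) = c := by
    have : (Matrix.diagonal (fun _ : Fin k => c)) *ᵥ v = c • v := by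
      funext x
      simp [Matrix.mulVec_diagonal]
    rw [this, dotProduct_smul, hnorm, smul_eq_mul, mul_one]
  rw [hdiag, smul_eq_mul, hnorm, mul_one] at h2
  linarith

theorem stmt_10 {n k : ℕ} (hk : 0 < k) (G : SimpleGraph (Fin n))
    (F : Fin k → Finset (Fin n)) (hF : IsCliquePartition G F) :
    (-((Finset.univ.sup (fun j => (F j).card) : ℕ) : ℝ) ≤ eigsDesc (pgMat F) ⟨k - 1, by omega⟩) ∧
    ((∀ j, (F j).card = Finset.univ.sup (fun j => (F j).card)) → n < k →
      eigsDesc (pgMat F) ⟨k - 1, by omega⟩ = -((Finset.univ.sup (fun j => (F j).card) : ℕ) : ℝ)) := by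
  set s : ℕ := Finset.univ.sup (fun j => (F j).card) with hs
  have hH : (pgMat F).IsHermitian := pgMat_isHermitian F
  -- the shifted matrix is PSD
  have hshift : pgMat F + Matrix.diagonal (fun _ : Fin k => (s : ℝ))
      = (vcMat F)ᴴ * vcMat F + Matrix.diagonal (fun j => (s : ℝ) - (F j).card) := by
    have hfun : (fun j => ((F j).card : ℝ) + ((s:ℝ) - (F j).card))
        = fun _ : Fin k => (s:ℝ) := by funext j; ring
    rw [key_identity G F hF, add_assoc, Matrix.diagonal_add, hfun]
  have hPSD : (pgMat F + Matrix.diagonal (fun _ : Fin k => (s : ℝ))).PosSemidef := by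
    rw [hshift]
    exact (Matrix.posSemidef_conjTranspose_mul_self _).add
      (Matrix.PosSemidef.diagonal fun j => by
        simp only [Pi.zero_apply, sub_nonneg]
        exact_mod_cast Finset.le_sup (f := fun j => (F j).card) (Finset.mem_univ j))
  have hbound : ∀ i, -(s : ℝ) ≤ hH.eigenvalues i :=
    fun i => eig_ge_of_shift_psd hH _ hPSD i
  -- eigsDesc at the last index is the minimum eigenvalue
  have hrev : (⟨k - 1, by omega⟩ : Fin k).rev = ⟨0, hk⟩ := by
    ext
    simp [Fin.rev]
    omega
  have hlast : eigsDesc (pgMat F) ⟨k - 1, by omega⟩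
      = hH.eigenvalues (Tuple.sort hH.eigenvalues ⟨0, hk⟩) := by
    rw [eigsDesc, dif_pos hH, hrev]
    rfl
  have hmin : ∀ i, eigsDesc (pgMat F) ⟨k - 1, by omega⟩ ≤ hH.eigenvalues i := by
    intro i
    rw [hlast]
    have hm := Tuple.monotone_sort hH.eigenvalues
    have := hm (a := ⟨0, hk⟩) (b := (Tuple.sort hH.eigenvalues).symm i) (by
      exact Fin.mk_le_of_le_val (Nat.zero_le _))
    simpa using this
  constructor
  · rw [hlast]
    exact hbound _
  · intro huni hn
    -- uniform case: pgMat + s I = NᴴN, which is singular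
    have huni' : pgMat F + Matrix.diagonal (fun _ : Fin k => (s : ℝ))
        = (vcMat F)ᴴ * vcMat F := by
      have hfun : (fun j => ((F j).card : ℝ)) = fun _ : Fin k => (s:ℝ) := by
        funext j; rw [huni j]
      rw [key_identity G F hF, hfun]
    have hdet : ((vcMat F)ᴴ * vcMat F).det = 0 := by
      by_contra hd
      have hu : IsUnit ((vcMat F)ᴴ * vcMat F) := by
        rw [Matrix.isUnit_iff_isUnit_det]
        exact isUnit_iff_ne_zero.mpr hd
      have hr := Matrix.rank_of_isUnit _ hu
      have hr2 : ((vcMat F)ᴴ * vcMat F).rank ≤ n := by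
        rw [Matrix.rank_conjTranspose_mul_self]
        simpa using (vcMat F).rank_le_card_height
      rw [hr] at hr2
      simp only [Fintype.card_fin] at hr2
      omega
    -- via the spectral theorem, some eigenvalue equals -s
    have hexists : ∃ i, hH.eigenvalues i = -(s : ℝ) := by
      set U : Matrix (Fin k) (Fin k) ℝ := (hH.eigenvectorUnitary : Matrix (Fin k) (Fin k) ℝ)
        with hU
      have hUU : star U * U = 1 := Matrix.UnitaryGroup.star_mul_self _
      have hdiag : star U * (pgMat F + Matrix.diagonal (fun _ : Fin k => (s : ℝ))) * U
          = Matrix.diagonal (fun i => hH.eigenvalues i + s) := by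
        have h1 : star U * pgMat F * U = Matrix.diagonal (RCLike.ofReal ∘ hH.eigenvalues) :=
          by
            have := hH.conjStarAlgAut_star_eigenvectorUnitary
            rw [Unitary.conjStarAlgAut_star_apply] at this
            exact this
        have h2 : star U * Matrix.diagonal (fun _ : Fin k => (s : ℝ)) * U
            = Matrix.diagonal (fun _ : Fin k => (s : ℝ)) := by
          rw [← Matrix.smul_one_eq_diagonal, Matrix.mul_smul, Matrix.smul_mul, mul_one, hUU]
        rw [Matrix.mul_add, Matrix.add_mul, h1, h2, ← Matrix.diagonal_add]
        congr 1
      have hdet2 : (Matrix.diagonal (fun i => hH.eigenvalues i + (s:ℝ))).det = 0 := by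
        rw [← hdiag]
        rw [Matrix.det_mul, Matrix.det_mul, huni', hdet]
        ring
      rw [Matrix.det_diagonal] at hdet2
      obtain ⟨i, _, hi⟩ := Finset.prod_eq_zero_iff.mp hdet2
      exact ⟨i, by linarith⟩
    obtain ⟨i, hi⟩ := hexists
    have h1 := hmin i
    have h2 : -(s : ℝ) ≤ eigsDesc (pgMat F) ⟨k - 1, by omega⟩ := by
      rw [hlast]; exact hbound _
    rw [hi] at h1
    linarith
end

section
/- Let G be a simple graph on n vertices that is clique-regular with respect to a clique partition F (every vertex lies in the same number t of cliques of F), and let Q_F = M_F M_F^T. Then the Consonni–Todeschini energy of Q_F equals the adjacency energy of G: Σ_{i=1}^n |λ_i(Q_F) − (Σ_{j=1}^n t_j^F)/n| = Σ_{i=1}^n |λ_i(G)|. -/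
open Matrix Finset

open Polynomial in
lemma myCharpolyConj {m : Type*} [Fintype m] [DecidableEq m]
    (U B V : Matrix m m ℝ) (hUV : U * V = 1) :
    (U * B * V).charpoly = B.charpoly := by
  have hmap : (C : ℝ →+* ℝ[X]).mapMatrix U * (C : ℝ →+* ℝ[X]).mapMatrix V = 1 := by
    rw [← _root_.map_mul, hUV, _root_.map_one]
  have key : charmatrix (U * B * V) =
      (C : ℝ →+* ℝ[X]).mapMatrix U * charmatrix B * (C : ℝ →+* ℝ[X]).mapMatrix V := by
    unfold charmatrix
    rw [mul_sub, sub_mul, _root_.map_mul, _root_.map_mul]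
    congr 1
    rw [← ((Matrix.scalar_commute (X : ℝ[X]) (fun r' => Commute.all _ _)
      ((C : ℝ →+* ℝ[X]).mapMatrix U)).eq), mul_assoc, hmap, mul_one]
  have hdet : ((C : ℝ →+* ℝ[X]).mapMatrix U).det * ((C : ℝ →+* ℝ[X]).mapMatrix V).det = 1 := by
    rw [← Matrix.det_mul, hmap, Matrix.det_one]
  rw [Matrix.charpoly, Matrix.charpoly, key, Matrix.det_mul, Matrix.det_mul,
    mul_right_comm, hdet, one_mul]

open Polynomial in
lemma myCharpolyHerm {N : ℕ} {B : Matrix (Fin N) (Fin N) ℝ} (hB : B.IsHermitian) :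
    B.charpoly = ∏ i, (X - C (hB.eigenvalues i)) := by
  have hU : (hB.eigenvectorUnitary : Matrix (Fin N) (Fin N) ℝ) *
      (star hB.eigenvectorUnitary : Matrix (Fin N) (Fin N) ℝ) = 1 :=
    Unitary.coe_mul_star_self _
  conv_lhs => rw [hB.spectral_theorem]
  rw [Unitary.conjStarAlgAut_apply, myCharpolyConj _ _ _ hU, RCLike.ofReal_real_eq_id]
  rw [Matrix.charpoly_of_upperTriangular _ (Matrix.blockTriangular_diagonal _)]
  simp

open Polynomial in
lemma myEigsShift {N : ℕ} {B Q : Matrix (Fin N) (Fin N) ℝ} (hB : B.IsHermitian)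
    (hQ : Q.IsHermitian) (c : ℝ) (hQB : Q = B + c • 1) :
    (Finset.univ.val.map hQ.eigenvalues)
      = Finset.univ.val.map (fun i => hB.eigenvalues i + c) := by
  have hU : (hB.eigenvectorUnitary : Matrix (Fin N) (Fin N) ℝ) *
      (star hB.eigenvectorUnitary : Matrix (Fin N) (Fin N) ℝ) = 1 :=
    Unitary.coe_mul_star_self _
  have hQ2 : Q = (hB.eigenvectorUnitary : Matrix (Fin N) (Fin N) ℝ) *
      Matrix.diagonal (fun i => hB.eigenvalues i + c) *
      (star hB.eigenvectorUnitary : Matrix (Fin N) (Fin N) ℝ) := by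
    have hd : Matrix.diagonal (fun i => hB.eigenvalues i + c)
        = Matrix.diagonal (RCLike.ofReal ∘ hB.eigenvalues) + c • (1 : Matrix (Fin N) (Fin N) ℝ) := by
      rw [RCLike.ofReal_real_eq_id]
      ext i j
      by_cases h : i = j <;> simp [h, Matrix.diagonal, Matrix.one_apply]
    rw [hd, mul_add, add_mul, ← Unitary.conjStarAlgAut_apply (S := ℝ), ← hB.spectral_theorem, hQB]
    congr 1
    rw [mul_smul_comm, mul_one, smul_mul_assoc, hU]
  have h1 : Q.charpoly = ∏ i, (X - C (hB.eigenvalues i + c)) := by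
    rw [hQ2, myCharpolyConj _ _ _ hU,
      Matrix.charpoly_of_upperTriangular _ (Matrix.blockTriangular_diagonal _)]
    simp
  have h2 : Q.charpoly = ∏ i, (X - C (hQ.eigenvalues i)) := myCharpolyHerm hQ
  have key : ((Finset.univ.val.map hQ.eigenvalues).map fun a => X - C a).prod
      = ((Finset.univ.val.map (fun i => hB.eigenvalues i + c)).map fun a => X - C a).prod := by
    rw [Multiset.map_map, Multiset.map_map]
    rw [← Finset.prod_eq_multiset_prod, ← Finset.prod_eq_multiset_prod]
    simp only [Function.comp_def]
    rw [← h2, h1]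
  calc Finset.univ.val.map hQ.eigenvalues
      = ((Finset.univ.val.map hQ.eigenvalues).map fun a => X - C a).prod.roots := by
        rw [roots_multiset_prod_X_sub_C]
    _ = ((Finset.univ.val.map (fun i => hB.eigenvalues i + c)).map fun a => X - C a).prod.roots := by
        rw [key]
    _ = _ := roots_multiset_prod_X_sub_C _

lemma mySumEigsDesc {N : ℕ} {B : Matrix (Fin N) (Fin N) ℝ} (hB : B.IsHermitian) (g : ℝ → ℝ) :
    ∑ i : Fin N, g (eigsDesc B i) = ∑ i : Fin N, g (hB.eigenvalues i) := by
  have : ∀ i : Fin N, eigsDesc B i = hB.eigenvalues (Tuple.sort hB.eigenvalues i.rev) := by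
    intro i
    simp only [eigsDesc, dif_pos hB, Function.comp_apply]
  simp only [this]
  exact Fintype.sum_equiv ((Fin.revPerm).trans (Tuple.sort hB.eigenvalues))
    _ _ (fun i => rfl)

theorem stmt_12 {n k t : ℕ} (G : SimpleGraph (Fin n)) [DecidableRel G.Adj]
    (F : Fin k → Finset (Fin n)) (hF : IsCliquePartition G F)
    (ht : ∀ v, cliqueDeg F v = t) :
    ∑ i : Fin n, |eigsDesc (vcMat F * (vcMat F)ᵀ) i - (∑ j : Fin n, (cliqueDeg F j : ℝ)) / n| =
      ∑ i : Fin n, |eigsDesc (G.adjMatrix ℝ) i| := by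
  classical
  -- Hermitian facts
  have hA : (G.adjMatrix ℝ).IsHermitian := by
    ext i j
    simp [Matrix.conjTranspose_apply, G.adj_comm]
  have hTrans : (vcMat F)ᵀ = (vcMat F)ᴴ := by
    ext i j
    simp [Matrix.conjTranspose_apply]
  have hQ : (vcMat F * (vcMat F)ᵀ).IsHermitian := by
    rw [hTrans]
    exact Matrix.isHermitian_mul_conjTranspose_self _
  -- the matrix identity Q = A + t • 1
  have hQA : vcMat F * (vcMat F)ᵀ = G.adjMatrix ℝ + (t : ℝ) • 1 := by
    ext i j
    have hsum : (vcMat F * (vcMat F)ᵀ) i j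
        = ((Finset.univ.filter fun l => i ∈ F l ∧ j ∈ F l).card : ℝ) := by
      rw [Matrix.mul_apply]
      rw [Finset.sum_congr rfl (fun l _ => show vcMat F i l * (vcMat F)ᵀ l j
        = if i ∈ F l ∧ j ∈ F l then (1:ℝ) else 0 by
          simp only [vcMat, Matrix.transpose_apply]
          by_cases h1 : i ∈ F l <;> by_cases h2 : j ∈ F l <;> simp [h1, h2])]
      rw [Finset.sum_boole]
    by_cases hij : i = j
    · subst hij
      have : (Finset.univ.filter fun l => i ∈ F l ∧ i ∈ F l) =
          (Finset.univ.filter fun l => i ∈ F l) := by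
        congr 1
        ext l
        simp
      rw [hsum, this]
      have := ht i
      unfold cliqueDeg at this
      simp [this, Matrix.one_apply]
    · by_cases hadj : G.Adj i j
      · obtain ⟨l, hl, hu⟩ := hF.2 hadj
        have hfil : (Finset.univ.filter fun l => i ∈ F l ∧ j ∈ F l) = {l} := by
          ext m
          simp only [Finset.mem_filter, Finset.mem_univ, true_and, Finset.mem_singleton]
          exact ⟨fun hm => hu m hm, fun hm => hm ▸ hl⟩
        rw [hsum, hfil]
        simp [hadj, Matrix.one_apply, hij]
      · have hfil : (Finset.univ.filter fun l => i ∈ F l ∧ j ∈ F l) = ∅ := by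
          ext m
          simp only [Finset.mem_filter, Finset.mem_univ, true_and, Finset.notMem_empty,
            iff_false, not_and]
          intro hi hj
          exact hadj ((hF.1 m) hi hj hij)
        rw [hsum, hfil]
        simp [hadj, Matrix.one_apply, hij]
  -- n = 0 case
  rcases Nat.eq_zero_or_pos n with hn | hn
  · subst hn
    simp
  -- the mean equals t
  have hmean : (∑ j : Fin n, (cliqueDeg F j : ℝ)) / n = t := by
    have : ∑ j : Fin n, (cliqueDeg F j : ℝ) = n * t := by
      rw [Finset.sum_congr rfl (fun j _ => by rw [ht j])]
      simp [mul_comm]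
    rw [this]
    field_simp
  rw [hmean]
  -- multiset of eigenvalues of Q
  have hshift := myEigsShift hA hQ (t : ℝ) hQA
  have hL : ∑ i : Fin n, |eigsDesc (vcMat F * (vcMat F)ᵀ) i - (t:ℝ)|
      = ∑ i : Fin n, |hA.eigenvalues i| := by
    rw [mySumEigsDesc hQ (fun x => |x - (t:ℝ)|)]
    have h1 : ∑ i : Fin n, |hQ.eigenvalues i - (t:ℝ)|
        = ((Finset.univ.val.map hQ.eigenvalues).map fun x => |x - (t:ℝ)|).sum := by
      rw [Multiset.map_map]
      exact Finset.sum_eq_multiset_sum _ _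
    have h2 : ((Finset.univ.val.map (fun i => hA.eigenvalues i + (t:ℝ))).map
        fun x => |x - (t:ℝ)|).sum = ∑ i : Fin n, |hA.eigenvalues i| := by
      rw [Multiset.map_map]
      rw [← Finset.sum_eq_multiset_sum]
      exact Finset.sum_congr rfl (fun i _ => by simp)
    rw [h1, hshift, h2]
  rw [hL, mySumEigsDesc hA (fun x => |x|)]
end

section
/- Let G be a simple graph that is s clique-uniform with respect to a clique partition F = {C_1, ..., C_k} (every clique of F has exactly s vertices), and let R_F = M_F^T M_F. Then the Consonni–Todeschini energy of R_F equals the adjacency energy of the clique partition graph: Σ_{i=1}^k |λ_i(R_F) − (Σ_{j=1}^k s_j^F)/k| = Σ_{i=1}^k |λ_i(P_G)|. -/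
open Matrix Finset Polynomial

lemma myCharpoly_conj {m : Type*} [Fintype m] [DecidableEq m]
    (U A : Matrix m m ℝ) (h1 : U * (star U) = 1) (h2 : (star U) * U = 1) :
    (U * A * (star U)).charpoly = A.charpoly := by
  let f : Matrix m m ℝ →+* Matrix m m ℝ[X] := (C : ℝ →+* ℝ[X]).mapMatrix
  have hm1 : f U * f (star U) = 1 := by rw [← _root_.map_mul, h1, _root_.map_one]
  have hm2 : f (star U) * f U = 1 := by rw [← _root_.map_mul, h2, _root_.map_one]
  have hscal : ∀ M : Matrix m m ℝ[X], Matrix.scalar m (X : ℝ[X]) * M = M * Matrix.scalar m X := by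
    intro M
    exact ((Matrix.scalar_commute (X : ℝ[X]) (fun r => mul_comm _ _) M).symm).eq.symm
  have key : charmatrix (U * A * star U) = f U * charmatrix A * f (star U) := by
    unfold charmatrix
    rw [mul_sub, sub_mul]
    congr 1
    · rw [← hscal (f U), mul_assoc, hm1, mul_one]
    · simp only [f, _root_.map_mul]
  rw [Matrix.charpoly, key, det_mul, det_mul, mul_comm, ← mul_assoc, ← det_mul, hm2, det_one,
    one_mul]
  rfl

lemma hermCharpoly {N : ℕ} (A : Matrix (Fin N) (Fin N) ℝ) (hA : A.IsHermitian) :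
    A.charpoly = ∏ i, (X - C (hA.eigenvalues i)) := by
  have hs := hA.spectral_theorem
  have hdiag : (diagonal ((RCLike.ofReal : ℝ → ℝ) ∘ hA.eigenvalues)) = diagonal hA.eigenvalues := by
    congr 1
  rw [hdiag] at hs
  set U := (hA.eigenvectorUnitary : Matrix (Fin N) (Fin N) ℝ)
  have h1 : U * (star U) = 1 := Unitary.coe_mul_star_self hA.eigenvectorUnitary
  have h2 : (star U) * U = 1 := Unitary.coe_star_mul_self hA.eigenvectorUnitary
  calc A.charpoly = (U * diagonal hA.eigenvalues * (star U)).charpoly := congrArg Matrix.charpoly hs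
    _ = (diagonal hA.eigenvalues).charpoly := myCharpoly_conj _ _ h1 h2
    _ = ∏ i, (X - C (hA.eigenvalues i)) := by
        rw [charpoly_of_upperTriangular _ (blockTriangular_diagonal _)]
        simp

lemma prod_roots_aux {N : ℕ} (g : Fin N → ℝ) :
    (∏ i, (X - C (g i))).roots = Multiset.map g Finset.univ.val := by
  rw [Finset.prod_eq_multiset_prod]
  have h : Multiset.map (fun i => X - C (g i)) Finset.univ.val
      = Multiset.map (fun a => X - C a) (Multiset.map g Finset.univ.val) := by
    rw [Multiset.map_map]; rfl
  rw [h, roots_multiset_prod_X_sub_C]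

lemma eigShift {N : ℕ} (A : Matrix (Fin N) (Fin N) ℝ) (hA : A.IsHermitian) (c : ℝ)
    (hB : (A + c • (1 : Matrix (Fin N) (Fin N) ℝ)).IsHermitian) :
    Multiset.map hB.eigenvalues Finset.univ.val
      = Multiset.map (fun i => hA.eigenvalues i + c) Finset.univ.val := by
  set U := (hA.eigenvectorUnitary : Matrix (Fin N) (Fin N) ℝ) with hU
  have h1 : U * star U = 1 := Unitary.coe_mul_star_self hA.eigenvectorUnitary
  have h2 : star U * U = 1 := Unitary.coe_star_mul_self hA.eigenvectorUnitary
  have hsA : A = U * diagonal hA.eigenvalues * star U := by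
    have hsp := hA.spectral_theorem
    have hdiag : (diagonal ((RCLike.ofReal : ℝ → ℝ) ∘ hA.eigenvalues))
        = diagonal hA.eigenvalues := by congr 1
    rw [hdiag] at hsp; exact hsp
  have hBeq : A + c • (1 : Matrix (Fin N) (Fin N) ℝ)
      = U * diagonal (fun i => hA.eigenvalues i + c) * star U := by
    have hc : U * (c • (1 : Matrix (Fin N) (Fin N) ℝ)) * star U = c • 1 := by
      rw [mul_smul_comm, mul_one, smul_mul_assoc, h1]
    have hd : diagonal hA.eigenvalues + c • (1 : Matrix (Fin N) (Fin N) ℝ)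
        = diagonal (fun i => hA.eigenvalues i + c) := by
      ext i j
      by_cases h : i = j
      · subst h; simp [Matrix.one_apply]
      · simp [diagonal_apply_ne _ h, Matrix.one_apply_ne h]
    calc A + c • (1 : Matrix (Fin N) (Fin N) ℝ)
        = U * diagonal hA.eigenvalues * star U + U * (c • 1) * star U := by rw [← hsA, hc]
      _ = U * (diagonal hA.eigenvalues + c • 1) * star U := by rw [← add_mul, ← mul_add]
      _ = _ := by rw [hd]
  have hcp : (A + c • (1 : Matrix (Fin N) (Fin N) ℝ)).charpoly
      = ∏ i, (X - C (hA.eigenvalues i + c)) := by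
    rw [hBeq, myCharpoly_conj _ _ h1 h2,
      charpoly_of_upperTriangular _ (blockTriangular_diagonal _)]
    simp
  have hcp2 := hermCharpoly _ hB
  have hroots : (∏ i, (X - C (hB.eigenvalues i))).roots
      = (∏ i, (X - C (hA.eigenvalues i + c))).roots := by rw [← hcp2, ← hcp]
  rwa [prod_roots_aux, prod_roots_aux] at hroots

lemma sum_of_multiset_eq {N : ℕ} (f g : Fin N → ℝ) (φ : ℝ → ℝ)
    (h : Multiset.map f Finset.univ.val = Multiset.map g Finset.univ.val) :
    ∑ i, φ (f i) = ∑ i, φ (g i) := by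
  have h2 : Multiset.map φ (Multiset.map f Finset.univ.val)
      = Multiset.map φ (Multiset.map g Finset.univ.val) := by rw [h]
  rw [Multiset.map_map, Multiset.map_map] at h2
  calc ∑ i, φ (f i) = (Multiset.map (φ ∘ f) Finset.univ.val).sum := rfl
    _ = (Multiset.map (φ ∘ g) Finset.univ.val).sum := by rw [h2]
    _ = ∑ i, φ (g i) := rfl

lemma sum_eigsDesc {N : ℕ} (A : Matrix (Fin N) (Fin N) ℝ) (hA : A.IsHermitian) (φ : ℝ → ℝ) :
    ∑ i, φ (eigsDesc A i) = ∑ i, φ (hA.eigenvalues i) := by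
  unfold eigsDesc
  simp only [dif_pos hA, Function.comp_apply]
  exact Equiv.sum_comp (Fin.revPerm.trans (Tuple.sort hA.eigenvalues))
    (fun x => φ (hA.eigenvalues x))

theorem stmt_13 {n k s : ℕ} (G : SimpleGraph (Fin n))
    (F : Fin k → Finset (Fin n)) (hF : IsCliquePartition G F)
    (hs : ∀ j, (F j).card = s) :
    ∑ i : Fin k, |eigsDesc ((vcMat F)ᵀ * vcMat F) i - (∑ j : Fin k, ((F j).card : ℝ)) / k| =
      ∑ i : Fin k, |eigsDesc (pgMat F) i| := by
  rcases Nat.eq_zero_or_pos k with hk | hk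
  · subst hk; simp
  · have hk0 : (k : ℝ) ≠ 0 := Nat.cast_ne_zero.mpr hk.ne'
    have hmean : (∑ j : Fin k, ((F j).card : ℝ)) / k = (s : ℝ) := by
      simp only [hs]
      rw [Finset.sum_const, Finset.card_univ, Fintype.card_fin, nsmul_eq_mul]
      field_simp
    rw [hmean]
    have hInter : ∀ j l : Fin k, j ≠ l → ((F j) ∩ (F l)).card ≤ 1 := by
      intro j l hjl
      refine Finset.card_le_one.mpr ?_
      intro u hu v hv
      by_contra huv
      have hadj : G.Adj u v := hF.1 j (Finset.mem_coe.mpr (Finset.mem_inter.mp hu).1)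
        (Finset.mem_coe.mpr (Finset.mem_inter.mp hv).1) huv
      obtain ⟨j0, _, huniq⟩ := hF.2 hadj
      exact hjl ((huniq j ⟨(Finset.mem_inter.mp hu).1, (Finset.mem_inter.mp hv).1⟩).trans
        (huniq l ⟨(Finset.mem_inter.mp hu).2, (Finset.mem_inter.mp hv).2⟩).symm)
    have hentry : ∀ j l : Fin k, ((vcMat F)ᵀ * vcMat F) j l = (((F j) ∩ (F l)).card : ℝ) := by
      intro j l
      simp only [Matrix.mul_apply, Matrix.transpose_apply, vcMat]
      have he : ∀ i : Fin n, ((if i ∈ F j then (1 : ℝ) else 0) * (if i ∈ F l then (1 : ℝ) else 0))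
          = if i ∈ F j ∩ F l then (1 : ℝ) else 0 := by
        intro i; by_cases h1 : i ∈ F j <;> by_cases h2 : i ∈ F l <;> simp [h1, h2]
      rw [Finset.sum_congr rfl fun i _ => he i, Finset.sum_ite_mem, Finset.univ_inter,
        Finset.sum_const, nsmul_eq_mul, mul_one]
    have hkey : (vcMat F)ᵀ * vcMat F = pgMat F + (s : ℝ) • (1 : Matrix (Fin k) (Fin k) ℝ) := by
      ext j l
      rw [hentry]
      by_cases hjl : j = l
      · subst hjl
        simp [pgMat, Matrix.one_apply, hs j]
      · simp only [Matrix.add_apply, Matrix.smul_apply, Matrix.one_apply_ne hjl, smul_zero,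
          add_zero, pgMat]
        by_cases hne : ((F j) ∩ (F l)).Nonempty
        · have hc1 : ((F j) ∩ (F l)).card = 1 :=
            le_antisymm (hInter j l hjl) (Finset.card_pos.mpr hne)
          simp [hjl, hne, hc1]
        · rw [Finset.not_nonempty_iff_eq_empty] at hne
          simp [hjl, hne]
    have hP : (pgMat F).IsHermitian := by
      ext j l
      simp only [Matrix.conjTranspose_apply, star_trivial, pgMat]
      exact if_congr (and_congr ne_comm (by rw [Finset.inter_comm])) rfl rfl
    have hI : ((s : ℝ) • (1 : Matrix (Fin k) (Fin k) ℝ)).IsHermitian := by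
      ext j l
      by_cases h : j = l
      · subst h; simp [Matrix.one_apply]
      · simp [Matrix.one_apply_ne h, Matrix.one_apply_ne (Ne.symm h)]
    have hB' : (pgMat F + (s : ℝ) • (1 : Matrix (Fin k) (Fin k) ℝ)).IsHermitian := hP.add hI
    calc ∑ i : Fin k, |eigsDesc ((vcMat F)ᵀ * vcMat F) i - (s : ℝ)|
        = ∑ i : Fin k, |eigsDesc (pgMat F + (s : ℝ) • 1) i - (s : ℝ)| := by rw [hkey]
      _ = ∑ i : Fin k, |hB'.eigenvalues i - (s : ℝ)| :=
          sum_eigsDesc _ hB' (fun x => |x - (s : ℝ)|)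
      _ = ∑ i : Fin k, |(hP.eigenvalues i + (s : ℝ)) - (s : ℝ)| :=
          sum_of_multiset_eq _ _ (fun x => |x - (s : ℝ)|) (eigShift _ hP (s : ℝ) hB')
      _ = ∑ i : Fin k, |hP.eigenvalues i| := by simp
      _ = ∑ i : Fin k, |eigsDesc (pgMat F) i| := (sum_eigsDesc _ hP (fun x => |x|)).symm
end

section
/- Let G be a simple graph on n vertices with vertex degrees d_1 ≥ d_2 ≥ ... ≥ d_n, positive inertia ν^+ and negative inertia ν^−, and set h = min{ν^+, ν^−}. Then the energy of G satisfies E(G) ≤ 2 Σ_{i=1}^{h} d_i. -/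
open Matrix Finset

/-! ### Auxiliary lemmas -/

lemma psd_diag_nonneg {N : ℕ} {M : Matrix (Fin N) (Fin N) ℝ} (hM : M.PosSemidef) (i : Fin N) :
    0 ≤ M i i := by
  have := hM.dotProduct_mulVec_nonneg (Pi.single i 1)
  simpa [dotProduct, mulVec, Pi.single_apply, Finset.sum_ite_eq] using this

lemma psd_trace_nonneg {N : ℕ} {M : Matrix (Fin N) (Fin N) ℝ} (hM : M.PosSemidef) :
    0 ≤ M.trace := by
  rw [Matrix.trace]
  exact Finset.sum_nonneg fun i _ => psd_diag_nonneg hM i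

lemma trace_mul_psd_nonneg {N : ℕ} {P B : Matrix (Fin N) (Fin N) ℝ}
    (hP : P.PosSemidef) (hB : B.PosSemidef) : 0 ≤ (P * B).trace := by
  obtain ⟨S, hSpsd, hSS⟩ : ∃ S : Matrix (Fin N) (Fin N) ℝ, S.PosSemidef ∧ S * S = B := by
    open scoped MatrixOrder in
    exact ⟨CFC.sqrt B, Matrix.nonneg_iff_posSemidef.mp (CFC.sqrt_nonneg B),
      CFC.sqrt_mul_sqrt_self B hB.nonneg⟩
  have h1 : P * B = P * S * S := by
    rw [mul_assoc, hSS]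
  have h2 : (P * S * S).trace = (S * P * S).trace := by
    rw [trace_mul_cycle]
  have h3 : (S * P * S).PosSemidef := by
    have := hP.conjTranspose_mul_mul_same S
    rwa [hSpsd.isHermitian.eq] at this
  rw [h1, h2]
  exact psd_trace_nonneg h3

lemma exists_proj {N : ℕ} {A : Matrix (Fin N) (Fin N) ℝ} (hA : A.IsHermitian) (I : Finset (Fin N)) :
    ∃ P : Matrix (Fin N) (Fin N) ℝ, P.PosSemidef ∧ (∀ i, P i i ≤ 1) ∧
      (∑ i, P i i) = (I.card : ℝ) ∧ (P * A).trace = ∑ i ∈ I, hA.eigenvalues i := by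
  set V : Matrix (Fin N) (Fin N) ℝ := (hA.eigenvectorUnitary : Matrix (Fin N) (Fin N) ℝ) with hV
  have hVs : star V * V = 1 := mem_unitaryGroup_iff'.mp hA.eigenvectorUnitary.2
  have hVV : V * star V = 1 := mem_unitaryGroup_iff.mp hA.eigenvectorUnitary.2
  set χ : Fin N → ℝ := fun i => if i ∈ I then 1 else 0 with hχ
  have hVD : ∀ i j, (V * diagonal χ) i j = V i j * χ j := fun i j => mul_diagonal χ V i j
  have hdiag : ∀ i, (V * diagonal χ * star V) i i = ∑ j, χ j * (V i j)^2 := by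
    intro i
    rw [Matrix.mul_apply]
    refine Finset.sum_congr rfl fun j _ => ?_
    rw [hVD]
    simp only [star_eq_conjTranspose, conjTranspose_apply, star_trivial]
    ring
  have hrow : ∀ i, ∑ j, (V i j)^2 = 1 := by
    intro i
    have := congrFun (congrFun hVV i) i
    rw [Matrix.mul_apply] at this
    simp only [star_eq_conjTranspose, conjTranspose_apply, star_trivial,
      Matrix.one_apply_eq] at this
    rw [← this]
    exact Finset.sum_congr rfl fun j _ => by ring
  refine ⟨V * diagonal χ * star V, ?_, ?_, ?_, ?_⟩
  · have hd : (diagonal χ).PosSemidef := .diagonal (by intro i; dsimp [χ]; positivity)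
    have := hd.mul_mul_conjTranspose_same V
    rw [star_eq_conjTranspose]
    exact this
  · intro i
    rw [hdiag i, ← hrow i]
    refine Finset.sum_le_sum fun j _ => ?_
    have h0 : (0:ℝ) ≤ (V i j)^2 := sq_nonneg _
    have h1 : χ j ≤ 1 := by dsimp [χ]; split <;> norm_num
    nlinarith
  · have : ∑ i, (V * diagonal χ * star V) i i = (V * diagonal χ * star V).trace := rfl
    rw [this, trace_mul_cycle, hVs, one_mul, trace_diagonal]
    simp [χ, Finset.sum_ite_mem]
  · have hspec := hA.spectral_theorem
    rw [RCLike.ofReal_real_eq_id, Function.id_comp, Unitary.conjStarAlgAut_apply] at hspec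
    rw [← hV] at hspec
    have hPA : (V * diagonal χ * star V) * A
        = V * (diagonal (fun i => χ i * hA.eigenvalues i) * star V) := by
      conv_lhs => rw [hspec]
      simp only [mul_assoc]
      rw [← mul_assoc (star V) V, hVs, one_mul, ← mul_assoc (diagonal χ),
        diagonal_mul_diagonal]
    rw [hPA, ← mul_assoc, trace_mul_cycle, hVs, one_mul, trace_diagonal]
    have : ∀ i : Fin N, χ i * hA.eigenvalues i = if i ∈ I then hA.eigenvalues i else 0 := by
      intro i; dsimp [χ]; rw [ite_mul, one_mul, zero_mul]
    rw [Finset.sum_congr rfl fun i _ => this i]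
    simp [Finset.sum_ite_mem]

lemma weighted_le_sorted {n h : ℕ} (hh : h ≤ n) (d : Fin n → ℕ) (w : Fin n → ℝ)
    (hw0 : ∀ i, 0 ≤ w i) (hw1 : ∀ i, w i ≤ 1) (hsum : ∑ i, w i = (h : ℝ)) :
    ∑ i, w i * (d i : ℝ) ≤
      ∑ i ∈ univ.filter (fun i : Fin n => (i : ℕ) < h), (sortedDesc d i : ℝ) := by
  rcases Nat.eq_zero_or_pos h with h0 | hpos
  · subst h0
    have hz : ∀ i ∈ (univ : Finset (Fin n)), w i = 0 :=
      (Finset.sum_eq_zero_iff_of_nonneg (fun i _ => hw0 i)).mp (by simpa using hsum)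
    have : ∑ i, w i * (d i : ℝ) = 0 :=
      Finset.sum_eq_zero fun i hi => by rw [hz i hi, zero_mul]
    rw [this]
    exact Finset.sum_nonneg fun i _ => by positivity
  · have hn : 0 < n := lt_of_lt_of_le hpos hh
    set σ := Tuple.sort d with hσ
    have hmono : Monotone (fun j : Fin n => (d (σ j) : ℝ)) := fun a b hab => by
      have := Tuple.monotone_sort d hab
      simp only [Function.comp_apply] at this
      show (d (σ a) : ℝ) ≤ (d (σ b) : ℝ)
      exact_mod_cast this
    set a : Fin n := ⟨n - h, by omega⟩ with ha
    have hRHS : ∑ i ∈ univ.filter (fun i : Fin n => (i : ℕ) < h), (sortedDesc d i : ℝ)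
        = ∑ j ∈ Finset.Ici a, (d (σ j) : ℝ) := by
      refine Finset.sum_nbij' (fun i => i.rev) (fun j => j.rev) ?_ ?_ ?_ ?_ ?_
      · intro i hi
        simp only [mem_filter, mem_univ, true_and] at hi
        have := i.isLt
        simp only [Finset.mem_Ici, Fin.le_def, Fin.val_rev, ha]
        omega
      · intro j hj
        simp only [Finset.mem_Ici, Fin.le_def, ha] at hj
        have := j.isLt
        simp only [mem_filter, mem_univ, true_and, Fin.val_rev]
        omega
      · intro i _; exact Fin.rev_rev i
      · intro j _; exact Fin.rev_rev j
      · intro i _; rfl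
    rw [hRHS]
    have hLHS : ∑ i, w i * (d i : ℝ) = ∑ j, w (σ j) * (d (σ j) : ℝ) :=
      (Equiv.sum_comp σ (fun i => w i * (d i : ℝ))).symm
    rw [hLHS]
    have husum : ∑ j, w (σ j) = (h : ℝ) := by
      rw [Equiv.sum_comp σ w]; exact hsum
    set t : ℝ := (d (σ a) : ℝ) with ht
    have hcard : (Finset.Ici a).card = h := by
      rw [Fin.card_Ici]; simp only [ha]; omega
    have e1 : ∑ j, w (σ j) * (d (σ j) : ℝ)
        = (∑ j, w (σ j) * ((d (σ j) : ℝ) - t)) + (∑ j, w (σ j)) * t := by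
      rw [Finset.sum_mul, ← Finset.sum_add_distrib]
      exact Finset.sum_congr rfl fun j _ => by ring
    have e2 : ∑ j ∈ Finset.Ici a, (d (σ j) : ℝ)
        = (∑ j ∈ Finset.Ici a, ((d (σ j) : ℝ) - t)) + (h : ℝ) * t := by
      rw [Finset.sum_sub_distrib, Finset.sum_const, hcard, nsmul_eq_mul]
      ring
    have key : ∑ j, w (σ j) * ((d (σ j) : ℝ) - t)
        ≤ ∑ j ∈ Finset.Ici a, ((d (σ j) : ℝ) - t) := by
      rw [← Finset.sum_filter_add_sum_filter_not univ (fun j => j ∈ Finset.Ici a)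
        (fun j => w (σ j) * ((d (σ j) : ℝ) - t))]
      have hfe : univ.filter (fun j => j ∈ Finset.Ici a) = Finset.Ici a := by
        rw [Finset.filter_mem_eq_inter, Finset.univ_inter]
      rw [hfe]
      have p1 : ∑ j ∈ Finset.Ici a, w (σ j) * ((d (σ j) : ℝ) - t)
          ≤ ∑ j ∈ Finset.Ici a, ((d (σ j) : ℝ) - t) := by
        refine Finset.sum_le_sum fun j hj => ?_
        have hge : t ≤ (d (σ j) : ℝ) := hmono (Finset.mem_Ici.mp hj)
        exact mul_le_of_le_one_left (sub_nonneg.mpr hge) (hw1 _)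
      have p2 : ∑ j ∈ univ.filter (fun j => ¬ j ∈ Finset.Ici a),
          w (σ j) * ((d (σ j) : ℝ) - t) ≤ 0 := by
        refine Finset.sum_nonpos fun j hj => ?_
        simp only [mem_filter, mem_univ, true_and, Finset.mem_Ici, not_le] at hj
        have hle : (d (σ j) : ℝ) ≤ t := hmono (le_of_lt hj)
        exact mul_nonpos_of_nonneg_of_nonpos (hw0 _) (sub_nonpos.mpr hle)
      linarith
    rw [e1, e2, husum]
    linarith

lemma signless_posSemidef {n : ℕ} (G : SimpleGraph (Fin n)) [DecidableRel G.Adj] :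
    (G.degMatrix ℝ + G.adjMatrix ℝ).PosSemidef := by
  refine posSemidef_iff_dotProduct_mulVec.mpr ⟨?_, ?_⟩
  · rw [Matrix.IsHermitian, conjTranspose_eq_transpose_of_trivial]
    exact IsSymm.add (G.isSymm_degMatrix ℝ) (SimpleGraph.isSymm_adjMatrix G)
  · intro x
    rw [star_trivial]
    have hq : x ⬝ᵥ ((G.degMatrix ℝ + G.adjMatrix ℝ) *ᵥ x) =
        (∑ i, ∑ j, if G.Adj i j then (x i + x j)^2 else 0) / 2 := by
      simp_rw [add_mulVec, dotProduct_add, SimpleGraph.dotProduct_mulVec_degMatrix,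
        SimpleGraph.dotProduct_mulVec_adjMatrix, ← sum_add_distrib,
        SimpleGraph.degree_eq_sum_if_adj, sum_mul, ite_mul, one_mul, zero_mul,
        ← sum_add_distrib, ite_add_ite, add_zero]
      rw [← add_self_div_two (∑ i : Fin n, ∑ j : Fin n, _)]
      conv_lhs => enter [1, 2, 2, i, 2, j]; rw [if_congr (SimpleGraph.adj_comm G i j) rfl rfl]
      conv_lhs => enter [1, 2]; rw [Finset.sum_comm]
      simp_rw [← sum_add_distrib, ite_add_ite]
      congr 2 with i
      congr 2 with j
      ring_nf
    rw [hq]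
    positivity

theorem stmt_16 {n : ℕ} (G : SimpleGraph (Fin n)) [DecidableRel G.Adj] :
    ∑ i : Fin n, |eigsDesc (G.adjMatrix ℝ) i| ≤
      2 * ∑ i ∈ Finset.univ.filter (fun i : Fin n =>
          (i : ℕ) < min (posInertia (G.adjMatrix ℝ)) (negInertia (G.adjMatrix ℝ))),
        (sortedDesc (fun v => G.degree v) i : ℝ) := by
  have hA : (G.adjMatrix ℝ).IsHermitian := by
    rw [Matrix.IsHermitian, conjTranspose_eq_transpose_of_trivial]
    exact SimpleGraph.isSymm_adjMatrix G
  set A := G.adjMatrix ℝ with hAdef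
  set lam := hA.eigenvalues with hlam
  -- LHS rewriting
  have h1 : ∑ i : Fin n, |eigsDesc A i| = ∑ i, |lam i| := by
    simp only [eigsDesc, dif_pos hA, Function.comp_apply]
    exact Fintype.sum_equiv (Fin.revPerm.trans (Tuple.sort lam))
      (fun i => |lam (Tuple.sort lam i.rev)|) (fun i => |lam i|) (fun i => rfl)
  -- trace is zero
  have htr : ∑ i, lam i = 0 := by
    have h2 : A.trace = ∑ i, lam i := by
      conv_lhs => rw [hA.spectral_theorem]
      rw [RCLike.ofReal_real_eq_id, Function.id_comp, Unitary.conjStarAlgAut_apply, trace_mul_cycle,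
        mem_unitaryGroup_iff'.mp hA.eigenvectorUnitary.2, one_mul, trace_diagonal]
    have h3 : A.trace = 0 := SimpleGraph.trace_adjMatrix (G := G) (α := ℝ)
    rw [← h2, h3]
  set Ipos := univ.filter (fun i => 0 < lam i) with hIpos
  set Ineg := univ.filter (fun i => lam i < 0) with hIneg
  have hnotpos : ∑ i ∈ univ.filter (fun i => ¬ 0 < lam i), lam i = ∑ i ∈ Ineg, lam i := by
    rw [← Finset.sum_filter_add_sum_filter_not (univ.filter fun i => ¬ 0 < lam i)
      (fun i => lam i < 0) lam]
    have hz : ∑ i ∈ (univ.filter fun i => ¬ 0 < lam i).filter (fun i => ¬ lam i < 0), lam i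
        = 0 := by
      refine Finset.sum_eq_zero fun i hi => ?_
      simp only [mem_filter, mem_univ, true_and, not_lt] at hi
      linarith [hi.1, hi.2]
    rw [hz, add_zero]
    congr 1
    ext i
    simp only [mem_filter, mem_univ, true_and, hIneg]
    constructor
    · exact fun h => h.2
    · exact fun h => ⟨by linarith, h⟩
  have hsplit : ∑ i ∈ Ipos, lam i + ∑ i ∈ Ineg, lam i = 0 := by
    rw [← hnotpos]
    rw [Finset.sum_filter_add_sum_filter_not univ (fun i => 0 < lam i) lam]
    exact htr
  have habs : ∑ i, |lam i| = ∑ i ∈ Ipos, lam i - ∑ i ∈ Ineg, lam i := by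
    rw [← Finset.sum_filter_add_sum_filter_not univ (fun i => 0 < lam i) (fun i => |lam i|)]
    have e1 : ∑ i ∈ Ipos, |lam i| = ∑ i ∈ Ipos, lam i := by
      refine Finset.sum_congr rfl fun i hi => ?_
      simp only [hIpos, mem_filter] at hi
      exact abs_of_pos hi.2
    have e2 : ∑ i ∈ univ.filter (fun i => ¬ 0 < lam i), |lam i|
        = - ∑ i ∈ univ.filter (fun i => ¬ 0 < lam i), lam i := by
      rw [← Finset.sum_neg_distrib]
      refine Finset.sum_congr rfl fun i hi => ?_
      simp only [mem_filter, mem_univ, true_and, not_lt] at hi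
      exact abs_of_nonpos hi
    rw [e1, e2, hnotpos]
    ring
  have hposI : posInertia A = Ipos.card := by
    simp only [posInertia, dif_pos hA, hIpos, hlam]
  have hnegI : negInertia A = Ineg.card := by
    simp only [negInertia, dif_pos hA, hIneg, hlam]
  -- the two cases
  rcases le_total (posInertia A) (negInertia A) with hc | hc
  · -- use positive eigenvalues and the Laplacian
    have hmin : min (posInertia A) (negInertia A) = Ipos.card := by
      rw [min_eq_left hc, hposI]
    obtain ⟨P, hPsd, hP1, hPtr, hPA⟩ := exists_proj hA Ipos
    have hAD : A = G.degMatrix ℝ - G.lapMatrix ℝ := by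
      rw [SimpleGraph.lapMatrix, sub_sub_cancel]
    have htrP : (P * A).trace = (P * G.degMatrix ℝ).trace - (P * G.lapMatrix ℝ).trace := by
      conv_lhs => rw [hAD]
      rw [mul_sub, trace_sub]
    have hlap : 0 ≤ (P * G.lapMatrix ℝ).trace :=
      trace_mul_psd_nonneg hPsd (SimpleGraph.posSemidef_lapMatrix ℝ G)
    have hdeg : (P * G.degMatrix ℝ).trace = ∑ i, P i i * (G.degree i : ℝ) := by
      rw [Matrix.trace]
      refine Finset.sum_congr rfl fun i _ => ?_
      rw [SimpleGraph.degMatrix, diag_apply, mul_diagonal]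
    have hle : ∑ i ∈ Ipos, lam i ≤ ∑ i, P i i * (G.degree i : ℝ) := by
      rw [← hPA, ← hdeg]
      linarith [htrP, hlap]
    have hcardle : Ipos.card ≤ n := by
      simpa using Finset.card_filter_le univ (fun i => 0 < lam i)
    have hw := weighted_le_sorted hcardle (fun v => G.degree v) (fun i => P i i)
      (fun i => psd_diag_nonneg hPsd i) hP1 hPtr
    rw [h1, habs, hmin]
    have : ∑ i ∈ Ipos, lam i - ∑ i ∈ Ineg, lam i = 2 * ∑ i ∈ Ipos, lam i := by linarith
    rw [this]
    have := le_trans hle hw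
    linarith
  · -- use negative eigenvalues and the signless Laplacian
    have hmin : min (posInertia A) (negInertia A) = Ineg.card := by
      rw [min_eq_right hc, hnegI]
    obtain ⟨P, hPsd, hP1, hPtr, hPA⟩ := exists_proj hA Ineg
    have hAD : -A = G.degMatrix ℝ - (G.degMatrix ℝ + G.adjMatrix ℝ) := by
      rw [hAdef]; abel
    have htrP : (P * (-A)).trace
        = (P * G.degMatrix ℝ).trace - (P * (G.degMatrix ℝ + G.adjMatrix ℝ)).trace := by
      conv_lhs => rw [hAD]
      rw [mul_sub, trace_sub]
    have hsig : 0 ≤ (P * (G.degMatrix ℝ + G.adjMatrix ℝ)).trace :=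
      trace_mul_psd_nonneg hPsd (signless_posSemidef G)
    have hdeg : (P * G.degMatrix ℝ).trace = ∑ i, P i i * (G.degree i : ℝ) := by
      rw [Matrix.trace]
      refine Finset.sum_congr rfl fun i _ => ?_
      rw [SimpleGraph.degMatrix, diag_apply, mul_diagonal]
    have hnegtr : (P * (-A)).trace = - ∑ i ∈ Ineg, lam i := by
      rw [mul_neg, trace_neg, hPA]
    have hle : - ∑ i ∈ Ineg, lam i ≤ ∑ i, P i i * (G.degree i : ℝ) := by
      rw [← hnegtr, ← hdeg]
      linarith [htrP, hsig]
    have hcardle : Ineg.card ≤ n := by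
      simpa using Finset.card_filter_le univ (fun i => lam i < 0)
    have hw := weighted_le_sorted hcardle (fun v => G.degree v) (fun i => P i i)
      (fun i => psd_diag_nonneg hPsd i) hP1 hPtr
    rw [h1, habs, hmin]
    have : ∑ i ∈ Ipos, lam i - ∑ i ∈ Ineg, lam i = 2 * (- ∑ i ∈ Ineg, lam i) := by linarith
    rw [this]
    have := le_trans hle hw
    linarith
end

section
/- For any simple graph G, the energy of its line graph L_G satisfies E(L_G) ≤ 4 ν^−(L_G), where ν^−(L_G) is the negative inertia of L_G. -/
open Matrix Finset

/-- The adjacency matrix of the line graph of `G`: vertices are the edges of `G`,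
two of them adjacent iff they are distinct and share an endpoint. -/
def lgMat {V : Type*} [Fintype V] [DecidableEq V] (G : SimpleGraph V) [DecidableRel G.Adj] :
    Matrix G.edgeSet G.edgeSet ℝ :=
  fun e f => if e ≠ f ∧ ∃ v : V, v ∈ (e : Sym2 V) ∧ v ∈ (f : Sym2 V) then 1 else 0

/-- The energy of a real symmetric matrix: the sum of the absolute values of its
eigenvalues (with multiplicity). -/
noncomputable def energy {m : Type*} [Fintype m] [DecidableEq m] (A : Matrix m m ℝ) : ℝ :=
  if hA : A.IsHermitian then ∑ i, |hA.eigenvalues i| else 0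

section Aux

variable {V : Type*} [Fintype V] [DecidableEq V] (G : SimpleGraph V) [DecidableRel G.Adj]

/-- The vertex-edge incidence matrix. -/
def incM : Matrix V G.edgeSet ℝ :=
  fun v e => if v ∈ (e : Sym2 V) then 1 else 0

lemma lgMat_symm (e f : G.edgeSet) : lgMat G e f = lgMat G f e := by
  unfold lgMat
  congr 1
  rw [eq_iff_iff]
  constructor <;> rintro ⟨h, v, h1, h2⟩ <;> exact ⟨h.symm, v, h2, h1⟩

lemma lgMat_herm : (lgMat G).IsHermitian := by
  ext e f
  rw [conjTranspose_apply, star_trivial, lgMat_symm]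

lemma incM_fact : (incM G)ᴴ * incM G = lgMat G + (2 : ℝ) • 1 := by
  ext e f
  rw [mul_apply]
  simp only [conjTranspose_apply, incM, star_trivial, ite_mul, one_mul, zero_mul, ← ite_and]
  rw [Finset.sum_boole]
  rcases eq_or_ne e f with rfl | hef
  · obtain ⟨z, hz⟩ := e
    induction z using Sym2.inductionOn with
    | hf a b =>
      have hab : a ≠ b := G.ne_of_adj ((SimpleGraph.mem_edgeSet G).mp hz)
      have : (univ.filter fun v => v ∈ ((⟨s(a, b), hz⟩ : G.edgeSet) : Sym2 V) ∧
          v ∈ ((⟨s(a, b), hz⟩ : G.edgeSet) : Sym2 V)) = {a, b} := by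
        ext v
        simp [Sym2.mem_iff]
      rw [this, Finset.card_pair hab]
      simp [lgMat, Matrix.one_apply]
  · by_cases hsh : ∃ v : V, v ∈ (e : Sym2 V) ∧ v ∈ (f : Sym2 V)
    · obtain ⟨v, hv⟩ := hsh
      have : (univ.filter fun w => w ∈ (e : Sym2 V) ∧ w ∈ (f : Sym2 V)) = {v} := by
        ext w
        simp only [mem_filter, mem_univ, true_and, mem_singleton]
        constructor
        · rintro ⟨hw1, hw2⟩
          by_contra hwv
          exact hef (Subtype.ext (Sym2.eq_of_ne_mem hwv hw1 hv.1 hw2 hv.2))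
        · rintro rfl; exact hv
      rw [this, Finset.card_singleton]
      have hlg : lgMat G e f = 1 := if_pos ⟨hef, v, hv⟩
      simp [hlg, Matrix.one_apply_ne hef]
    · have : (univ.filter fun w => w ∈ (e : Sym2 V) ∧ w ∈ (f : Sym2 V)) = ∅ := by
        ext w
        simp only [mem_filter, mem_univ, true_and, Finset.notMem_empty, iff_false]
        exact fun hw => hsh ⟨w, hw⟩
      rw [this]
      have hlg : lgMat G e f = 0 := if_neg fun h => hsh h.2
      simp [hlg, Matrix.one_apply_ne hef]

lemma lgMat_shifted_posSemidef : (lgMat G + (2 : ℝ) • 1).PosSemidef := by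
  rw [← incM_fact]
  exact posSemidef_conjTranspose_mul_self _

lemma eigenvalues_ge (i : G.edgeSet) : -2 ≤ (lgMat_herm G).eigenvalues i := by
  set hA := lgMat_herm G
  set x : G.edgeSet → ℝ := ⇑(hA.eigenvectorBasis i) with hxdef
  have hx : lgMat G *ᵥ x = hA.eigenvalues i • x := hA.mulVec_eigenvectorBasis i
  have hnorm : dotProduct (star x) x = 1 := by
    have h1 : (inner ℝ (hA.eigenvectorBasis i) (hA.eigenvectorBasis i) : ℝ) =
        dotProduct (star x) x :=
      (EuclideanSpace.inner_eq_star_dotProduct _ _).trans (dotProduct_comm _ _)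
    have h2 : ‖hA.eigenvectorBasis i‖ = 1 := hA.eigenvectorBasis.orthonormal.1 i
    rw [← h1, real_inner_self_eq_norm_sq, h2]
    norm_num
  have h0 := (lgMat_shifted_posSemidef G).dotProduct_mulVec_nonneg x
  have hmv : (lgMat G + (2 : ℝ) • 1) *ᵥ x = (hA.eigenvalues i + 2) • x := by
    rw [add_mulVec, hx, smul_mulVec, one_mulVec, add_smul]
  rw [hmv, dotProduct_smul, smul_eq_mul, hnorm, mul_one] at h0
  linarith

lemma sum_eigenvalues_eq_zero : ∑ i, (lgMat_herm G).eigenvalues i = 0 := by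
  have htr : (lgMat G).trace = ∑ i, (lgMat_herm G).eigenvalues i := by
    rw [(lgMat_herm G).trace_eq_sum_eigenvalues]
    simp
  rw [← htr, Matrix.trace]
  apply Finset.sum_eq_zero
  intro e _
  simp [Matrix.diag, lgMat]

end Aux

theorem stmt_17 {V : Type*} [Fintype V] [DecidableEq V]
    (G : SimpleGraph V) [DecidableRel G.Adj] :
    energy (lgMat G) ≤ 4 * (negInertia (lgMat G) : ℝ) := by
  have hA := lgMat_herm G
  rw [energy, dif_pos hA, negInertia, dif_pos hA]
  set f := hA.eigenvalues with hf
  have hsum : ∑ i, f i = 0 := sum_eigenvalues_eq_zero G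
  have hge : ∀ i, -2 ≤ f i := eigenvalues_ge G
  set P := univ.filter fun i => f i < 0 with hP
  have hsplit : ∑ i ∈ P, f i + ∑ i ∈ univ.filter (fun i => ¬ f i < 0), f i = ∑ i, f i :=
    Finset.sum_filter_add_sum_filter_not _ _ _
  have habs : ∑ i, |f i| = ∑ i ∈ P, |f i| + ∑ i ∈ univ.filter (fun i => ¬ f i < 0), |f i| :=
    (Finset.sum_filter_add_sum_filter_not _ _ _).symm
  have h1 : ∑ i ∈ P, |f i| = -∑ i ∈ P, f i := by
    rw [← Finset.sum_neg_distrib]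
    exact Finset.sum_congr rfl fun i hi => abs_of_neg (Finset.mem_filter.mp hi).2
  have h2 : ∑ i ∈ univ.filter (fun i => ¬ f i < 0), |f i| =
      ∑ i ∈ univ.filter (fun i => ¬ f i < 0), f i :=
    Finset.sum_congr rfl fun i hi =>
      abs_of_nonneg (not_lt.mp (Finset.mem_filter.mp hi).2)
  have hbound : -∑ i ∈ P, f i ≤ 2 * P.card := by
    calc -∑ i ∈ P, f i = ∑ i ∈ P, (-f i) := by rw [Finset.sum_neg_distrib]
    _ ≤ ∑ _i ∈ P, (2 : ℝ) := Finset.sum_le_sum fun i _ => by linarith [hge i]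
    _ = 2 * P.card := by rw [Finset.sum_const, nsmul_eq_mul, mul_comm]
  have : ∑ i, |f i| = 2 * (-∑ i ∈ P, f i) := by
    rw [habs, h1, h2]
    linarith [hsplit, hsum]
  rw [this]
  linarith
end

section
/- Let s ≥ 3 and let G = K_s □ K_2 be the Cartesian product of the complete graph on s vertices with the complete graph on 2 vertices. Then q(G) = 2; moreover, there exists a matrix A ∈ S(G) with exactly two distinct eigenvalues that has the Strong Spectral Property. -/
open Matrix Finset

/-- `S(G)`: real symmetric matrices whose off-diagonal zero/nonzero pattern is given by `G`. -/
def SMat {V : Type*} [Fintype V] (G : SimpleGraph V) : Set (Matrix V V ℝ) :=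
  {A | A.IsSymm ∧ ∀ i j, i ≠ j → (A i j ≠ 0 ↔ G.Adj i j)}

/-- The Strong Spectral Property of a real symmetric matrix. -/
def HasSSP {V : Type*} [Fintype V] [DecidableEq V] (A : Matrix V V ℝ) : Prop :=
  ∀ X : Matrix V V ℝ, X.IsSymm → Matrix.hadamard A X = 0 →
    Matrix.hadamard (1 : Matrix V V ℝ) X = 0 → A * X - X * A = 0 → X = 0

/-- `q(G)`: the minimum number of distinct eigenvalues over matrices in `S(G)`. -/
noncomputable def qNum {V : Type*} [Fintype V] [DecidableEq V] (G : SimpleGraph V) : ℕ :=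
  sInf {m | ∃ A ∈ SMat G, (spectrum ℝ A).ncard = m}

/-- The witness matrix: blocks `[[J, cI],[cI, sI - J]]` with `c = √(s+1)`. -/
noncomputable def Amat (s : ℕ) : Matrix (Fin s × Fin 2) (Fin s × Fin 2) ℝ :=
  fun x y =>
    if x.2 = y.2 then (if x.2 = 0 then 1 else if x.1 = y.1 then (s : ℝ) - 1 else -1)
    else (if x.1 = y.1 then Real.sqrt (s + 1) else 0)

lemma csq (s : ℕ) : Real.sqrt (s + 1) * Real.sqrt (s + 1) = (s : ℝ) + 1 :=
  Real.mul_self_sqrt (by positivity)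

lemma cne (s : ℕ) : Real.sqrt ((s : ℕ) + 1) ≠ 0 := by positivity

lemma Amat_symm (s : ℕ) : (Amat s).IsSymm := by
  ext ⟨i, k⟩ ⟨j, l⟩
  simp only [Matrix.transpose_apply, Amat]
  fin_cases k <;> fin_cases l <;> by_cases h : i = j <;>
    simp_all <;> (intro hij; first | exact absurd hij h | exact absurd hij.symm h)

lemma Amat_mem (s : ℕ) (hs : 3 ≤ s) :
    Amat s ∈ SMat ((⊤ : SimpleGraph (Fin s)).boxProd (⊤ : SimpleGraph (Fin 2))) := by
  refine ⟨Amat_symm s, ?_⟩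
  rintro ⟨i, k⟩ ⟨j, l⟩ hne
  have hs1 : (s : ℝ) - 1 ≠ 0 := by
    have : (3 : ℝ) ≤ (s : ℝ) := by exact_mod_cast hs
    linarith
  rw [SimpleGraph.boxProd_adj]
  fin_cases k <;> fin_cases l <;> by_cases h : i = j <;>
    simp_all [Amat, cne, Prod.ext_iff]

lemma Amat_sq (s : ℕ) :
    Amat s * Amat s
      = (s : ℝ) • Amat s + ((s : ℝ) + 1) • (1 : Matrix (Fin s × Fin 2) (Fin s × Fin 2) ℝ) := by
  have hD : ∀ (m j : Fin s), (if m = j then (s:ℝ)-1 else -1)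
      = (s:ℝ) * (if m = j then 1 else 0) - 1 := by intro m j; split <;> ring
  ext ⟨i, k⟩ ⟨j, l⟩
  rw [Matrix.mul_apply, Fintype.sum_prod_type]
  simp only [Fin.sum_univ_two]
  fin_cases k <;> fin_cases l <;> by_cases h : i = j <;>
    · simp only [Amat, Matrix.add_apply, Matrix.smul_apply, Matrix.one_apply, Prod.ext_iff, hD]
      simp [h, mul_ite, ite_mul, mul_sub, sub_mul, Finset.sum_sub_distrib, Finset.sum_add_distrib,
        Finset.sum_ite_eq, Finset.sum_ite_eq', Finset.mul_sum, csq, mul_comm]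
      try ring_nf
      try simp [csq]
      try ring

lemma Amat_quad (s : ℕ) :
    (Amat s - ((s:ℝ)+1) • 1) * (Amat s + 1) = 0 := by
  have h := Amat_sq s
  rw [sub_mul, mul_add, mul_one, smul_mul_assoc, one_mul, h]
  module

lemma Amat_spectrum (s : ℕ) (hs : 3 ≤ s) :
    spectrum ℝ (Amat s) = {(s:ℝ)+1, -1} := by
  have hpair : ∀ p q : Fin s × Fin 2, p = (⟨0, by omega⟩, 0) → q = (⟨1, by omega⟩, 0) →
      Amat s p q = 1 := by
    rintro p q rfl rfl
    simp [Amat, Fin.ext_iff]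
  set p0 : Fin s × Fin 2 := (⟨0, by omega⟩, 0)
  set q0 : Fin s × Fin 2 := (⟨1, by omega⟩, 0)
  have hA10 : Amat s p0 q0 = 1 := hpair _ _ rfl rfl
  have hne : p0 ≠ q0 := by simp [p0, q0, Prod.ext_iff, Fin.ext_iff]
  ext x
  rw [spectrum.mem_iff, Algebra.algebraMap_eq_smul_one]
  constructor
  · intro hx
    by_contra hmem
    apply hx
    simp only [Set.mem_insert_iff, Set.mem_singleton_iff, not_or] at hmem
    obtain ⟨h1, h2⟩ := hmem
    set d : ℝ := x * ((s:ℝ) - x) + (s:ℝ) + 1 with hd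
    have hdne : d ≠ 0 := by
      have : d = -((x - ((s:ℝ)+1)) * (x + 1)) := by ring
      rw [this]
      intro hc
      rcases mul_eq_zero.1 (neg_eq_zero.1 hc) with h | h
      · exact h1 (by linarith)
      · exact h2 (by linarith)
    have expand : ∀ a b : ℝ, (a • 1 - Amat s) * (b • 1 - Amat s)
        = (a*b) • 1 - (a+b) • Amat s + Amat s * Amat s := by
      intro a b
      simp only [sub_mul, mul_sub, smul_mul_assoc, mul_smul_comm, one_mul, mul_one, smul_smul]
      module
    have huv : (x • 1 - Amat s) * (((s:ℝ) - x) • 1 - Amat s) = d • 1 := by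
      rw [expand, Amat_sq s, hd]
      module
    have hvu : (((s:ℝ) - x) • 1 - Amat s) * (x • 1 - Amat s) = d • 1 := by
      rw [expand, Amat_sq s, hd]
      module
    refine ⟨⟨x • 1 - Amat s, d⁻¹ • (((s:ℝ) - x) • 1 - Amat s), ?_, ?_⟩, rfl⟩
    · rw [mul_smul_comm, huv, smul_smul, inv_mul_cancel₀ hdne, one_smul]
    · rw [smul_mul_assoc, hvu, smul_smul, inv_mul_cancel₀ hdne, one_smul]
  · intro hx
    rcases hx with hx | hx
    · subst hx
      rintro ⟨u, hu⟩
      have h0 : (↑u : Matrix (Fin s × Fin 2) (Fin s × Fin 2) ℝ) * (Amat s + 1) = 0 := by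
        rw [hu]
        have := Amat_quad s
        calc (((s:ℝ)+1) • 1 - Amat s) * (Amat s + 1)
            = (-(Amat s - ((s:ℝ)+1) • 1)) * (Amat s + 1) := by rw [neg_sub]
          _ = -((Amat s - ((s:ℝ)+1) • 1) * (Amat s + 1)) := by rw [neg_mul]
          _ = 0 := by rw [this, neg_zero]
      have h1 : (Amat s + 1 : Matrix _ _ ℝ) = 0 := by
        calc (Amat s + 1 : Matrix _ _ ℝ) = (↑u⁻¹ * ↑u) * (Amat s + 1) := by
              rw [u.inv_mul, one_mul]
          _ = ↑u⁻¹ * (↑u * (Amat s + 1)) := by rw [mul_assoc]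
          _ = 0 := by rw [h0, mul_zero]
      have := congrFun (congrFun h1 p0) q0
      simp only [Matrix.add_apply, Matrix.one_apply_ne hne, Matrix.zero_apply, hA10] at this
      norm_num at this
    · simp only [Set.mem_singleton_iff] at hx
      subst hx
      rintro ⟨u, hu⟩
      have h0 : (Amat s - ((s:ℝ)+1) • 1) * (↑u : Matrix (Fin s × Fin 2) (Fin s × Fin 2) ℝ) = 0 := by
        rw [hu]
        have := Amat_quad s
        calc (Amat s - ((s:ℝ)+1) • 1) * ((-1 : ℝ) • 1 - Amat s)
            = (Amat s - ((s:ℝ)+1) • 1) * (-(Amat s + 1)) := by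
              congr 1; module
          _ = -((Amat s - ((s:ℝ)+1) • 1) * (Amat s + 1)) := by rw [mul_neg]
          _ = 0 := by rw [this, neg_zero]
      have h1 : (Amat s - ((s:ℝ)+1) • 1 : Matrix _ _ ℝ) = 0 := by
        calc (Amat s - ((s:ℝ)+1) • 1 : Matrix _ _ ℝ)
            = (Amat s - ((s:ℝ)+1) • 1) * (↑u * ↑u⁻¹) := by rw [u.mul_inv, mul_one]
          _ = ((Amat s - ((s:ℝ)+1) • 1) * ↑u) * ↑u⁻¹ := by rw [mul_assoc]
          _ = 0 := by rw [h0, zero_mul]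
      have := congrFun (congrFun h1 p0) q0
      simp only [Matrix.sub_apply, Matrix.smul_apply, Matrix.one_apply_ne hne,
        Matrix.zero_apply, hA10, smul_zero, sub_zero] at this
      norm_num at this

lemma Amat_ssp (s : ℕ) (hs : 3 ≤ s) (X : Matrix (Fin s × Fin 2) (Fin s × Fin 2) ℝ)
    (hXs : X.IsSymm) (h1 : Matrix.hadamard (Amat s) X = 0)
    (h2 : Matrix.hadamard (1 : Matrix (Fin s × Fin 2) (Fin s × Fin 2) ℝ) X = 0)
    (h3 : Amat s * X - X * Amat s = 0) : X = 0 := by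
  have hs1 : (s : ℝ) - 1 ≠ 0 := by
    have : (3 : ℝ) ≤ (s : ℝ) := by exact_mod_cast hs
    linarith
  have hsne : (s : ℝ) ≠ 0 := by
    have : (3 : ℝ) ≤ (s : ℝ) := by exact_mod_cast hs
    linarith
  have hAX : ∀ p q, Amat s p q * X p q = 0 := by
    intro p q
    have := congrFun (congrFun h1 p) q
    simpa [Matrix.hadamard] using this
  have hz00 : ∀ i j : Fin s, X (i, 0) (j, 0) = 0 := by
    intro i j
    have := hAX (i, 0) (j, 0)
    simpa [Amat] using this
  have hz11 : ∀ i j : Fin s, X (i, 1) (j, 1) = 0 := by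
    intro i j
    have := hAX (i, 1) (j, 1)
    by_cases h : i = j
    · subst h
      simp [Amat, mul_eq_zero, hs1] at this
      exact this
    · simp [Amat, h, mul_eq_zero] at this
      exact this
  have hzd : ∀ i : Fin s, X (i, 0) (i, 1) = 0 := by
    intro i
    have := hAX (i, 0) (i, 1)
    simpa [Amat, cne s] using this
  have hcomm : ∀ p q, (Amat s * X) p q = (X * Amat s) p q := by
    intro p q
    have h4 : Amat s * X = X * Amat s := by
      have := sub_eq_zero.mp h3; exact this
    rw [h4]
  have hYsymm : ∀ i j : Fin s, X (j, 0) (i, 1) = X (i, 0) (j, 1) := by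
    intro i j
    have h := hcomm (i, 0) (j, 0)
    rw [Matrix.mul_apply, Matrix.mul_apply, Fintype.sum_prod_type, Fintype.sum_prod_type] at h
    simp only [Fin.sum_univ_two] at h
    simp [Amat, hz00, ite_mul, mul_ite, Finset.sum_ite_eq, Finset.sum_ite_eq'] at h
    have h' : X (i, 1) (j, 0) = X (i, 0) (j, 1) := by
      apply mul_left_cancel₀ (cne s)
      rw [h, mul_comm]
    rw [← h']
    exact hXs.apply _ _
  have hrel : ∀ i j : Fin s,
      (∑ m, X (m, 0) (j, 1)) = (s : ℝ) * X (i, 0) (j, 1) - ∑ m, X (i, 0) (m, 1) := by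
    intro i j
    have h := hcomm (i, 0) (j, 1)
    rw [Matrix.mul_apply, Matrix.mul_apply, Fintype.sum_prod_type, Fintype.sum_prod_type] at h
    simp only [Fin.sum_univ_two] at h
    have hD : ∀ (m : Fin s), (if (m:Fin s) = j then (s:ℝ)-1 else -1)
        = (s:ℝ) * (if m = j then 1 else 0) - 1 := by intro m; split <;> ring
    simp [Amat, hz00, hz11, ite_mul, mul_ite, Finset.sum_ite_eq, Finset.sum_ite_eq', hD,
      mul_sub, sub_mul, Finset.sum_sub_distrib, Finset.sum_add_distrib, mul_one] at h
    linarith [h]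
  have hr0 : ∀ i : Fin s, (∑ m, X (i, 0) (m, 1)) = 0 := by
    intro i
    have h := hrel i i
    have hcol : (∑ m, X (m, 0) (i, 1)) = ∑ m, X (i, 0) (m, 1) := by
      apply Finset.sum_congr rfl
      intro m _
      exact hYsymm i m
    rw [hcol, hzd i, mul_zero] at h
    linarith
  have hY0 : ∀ i j : Fin s, X (i, 0) (j, 1) = 0 := by
    intro i j
    have h := hrel i j
    have hcol : (∑ m, X (m, 0) (j, 1)) = ∑ m, X (j, 0) (m, 1) := by
      apply Finset.sum_congr rfl
      intro m _
      exact hYsymm j m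
    rw [hcol, hr0, hr0] at h
    have : (s : ℝ) * X (i, 0) (j, 1) = 0 := by linarith
    exact (mul_eq_zero.mp this).resolve_left hsne
  ext ⟨i, k⟩ ⟨j, l⟩
  fin_cases k <;> fin_cases l
  · simpa using hz00 i j
  · simpa using hY0 i j
  · have hfin : X (i, 1) (j, 0) = 0 :=
      (hXs.apply _ _).trans ((hYsymm i j).trans (hY0 i j))
    simpa using hfin
  · simpa using hz11 i j

lemma lower_bound (s : ℕ) (hs : 3 ≤ s) (A : Matrix (Fin s × Fin 2) (Fin s × Fin 2) ℝ)
    (hAs : A.IsSymm)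
    (hadj : ∀ i j, i ≠ j → (A i j ≠ 0 ↔
      ((⊤ : SimpleGraph (Fin s)).boxProd (⊤ : SimpleGraph (Fin 2))).Adj i j)) :
    2 ≤ (spectrum ℝ A).ncard := by
  have hH : A.IsHermitian := by
    rw [Matrix.IsHermitian]
    ext i j
    rw [Matrix.conjTranspose_apply, star_trivial]
    exact hAs.apply i j
  set p0 : Fin s × Fin 2 := (⟨0, by omega⟩, 0) with hp0
  set q0 : Fin s × Fin 2 := (⟨1, by omega⟩, 0) with hq0
  have hne : p0 ≠ q0 := by simp [hp0, hq0, Prod.ext_iff, Fin.ext_iff]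
  have hA10 : A p0 q0 ≠ 0 := by
    rw [hadj p0 q0 hne, SimpleGraph.boxProd_adj]
    left
    constructor
    · simp [hp0, hq0, Fin.ext_iff]
    · rfl
  have hspec : spectrum ℝ A = Set.range hH.eigenvalues := hH.spectrum_real_eq_range_eigenvalues
  have hfin : (spectrum ℝ A).Finite := by
    rw [hspec]; exact Set.finite_range _
  have hnonempty : (spectrum ℝ A).Nonempty := by
    rw [hspec]; exact ⟨_, ⟨p0, rfl⟩⟩
  have h1 : 1 ≤ (spectrum ℝ A).ncard := (Set.ncard_pos hfin).mpr hnonempty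
  rcases Nat.lt_or_ge ((spectrum ℝ A).ncard) 2 with h | h
  · exfalso
    have hcard1 : (spectrum ℝ A).ncard = 1 := by omega
    obtain ⟨lam, hlam⟩ := (Set.ncard_eq_one).mp hcard1
    have hev : ∀ i, hH.eigenvalues i = lam := by
      intro i
      have : hH.eigenvalues i ∈ spectrum ℝ A := hH.eigenvalues_mem_spectrum_real i
      rw [hlam] at this
      exact this
    have hdiag : Matrix.diagonal (RCLike.ofReal ∘ hH.eigenvalues) =
        lam • (1 : Matrix (Fin s × Fin 2) (Fin s × Fin 2) ℝ) := by
      ext i j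
      by_cases hij : i = j
      · subst hij
        simp [Matrix.diagonal_apply_eq, hev]
      · simp [Matrix.diagonal_apply_ne _ hij, Matrix.one_apply_ne hij]
    have hAeq : A = lam • (1 : Matrix (Fin s × Fin 2) (Fin s × Fin 2) ℝ) := by
      conv_lhs => rw [hH.spectral_theorem]
      rw [hdiag, Unitary.conjStarAlgAut_apply, mul_smul_comm, smul_mul_assoc, mul_one]
      congr 1
      exact (Matrix.mem_unitaryGroup_iff).mp (hH.eigenvectorUnitary).2
    apply hA10
    rw [hAeq]
    simp [Matrix.one_apply_ne hne]
  · exact h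

theorem stmt_18 (s : ℕ) (hs : 3 ≤ s) :
    qNum ((⊤ : SimpleGraph (Fin s)).boxProd (⊤ : SimpleGraph (Fin 2))) = 2 ∧
    ∃ A ∈ SMat ((⊤ : SimpleGraph (Fin s)).boxProd (⊤ : SimpleGraph (Fin 2))),
      (spectrum ℝ A).ncard = 2 ∧ HasSSP A := by
  have hcard : (spectrum ℝ (Amat s)).ncard = 2 := by
    rw [Amat_spectrum s hs]
    apply Set.ncard_pair
    have h0 : (0:ℝ) ≤ (s:ℝ) := by positivity
    intro hcontra
    linarith [hcontra]
  constructor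
  · have hmem : 2 ∈ {m | ∃ A ∈ SMat ((⊤ : SimpleGraph (Fin s)).boxProd (⊤ : SimpleGraph (Fin 2))),
        (spectrum ℝ A).ncard = m} := ⟨Amat s, Amat_mem s hs, hcard⟩
    unfold qNum
    apply le_antisymm
    · exact Nat.sInf_le hmem
    · apply le_csInf ⟨2, hmem⟩
      rintro m ⟨A, hA, rfl⟩
      exact lower_bound s hs A hA.1 hA.2
  · exact ⟨Amat s, Amat_mem s hs, hcard, fun X hXs hX1 hX2 hX3 =>
      Amat_ssp s hs X hXs hX1 hX2 hX3⟩
end
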